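/- Core estimate of Lemma 4.5 (Gaussian bound for the density of non-equilibrated blocks). Consider the East model or the FA-1f model (either boundary choice) in dimension 1 at density ρ∈(0,1), with K dividing N, ε>0 as in the definition of the activity-density labels, and V(η)=Σ_{i=1}^{N/K−1} 1_{𝓔_i}(η)1_{𝓩_{i+1}}(η) + 1_{𝓔_{N/K}}(η). Assume S>0 is a uniform spectral gap lower bound for the model on finite intervals with empty right boundary condition. Set m=max_{1≤i≤N/K} ν(1_{𝓔_i}). Then for every λ∈ℝ, every γ>0, and every f:Ω_N→[0,∞) with ν(f)=1: γ·ν(f·V) − e^λ·𝒟_N(√f) ≤ (N/K)·( γ·m + 2γ²/(S·e^λ) ). -/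

import Mathlib

open Finset Filter

open scoped Classical

/-- A configuration on the box `{1,…,N}` (0-indexed by `Fin N`). -/
abbrev Config (N : ℕ) := Fin N → Bool

/-- Occupation variable `η_i ∈ {0,1}` as a real number. -/
noncomputable def occ {N : ℕ} (η : Config N) (i : Fin N) : ℝ := if η i then 1 else 0

/-- Bernoulli(ρ) product weight of a configuration. -/
noncomputable def bern (ρ : ℝ) {N : ℕ} (η : Config N) : ℝ :=
  ∏ i, (if η i then ρ else 1 - ρ)

/-- Expectation under the Bernoulli(ρ) product measure `ν`. -/
noncomputable def expect (ρ : ℝ) {N : ℕ} (f : Config N → ℝ) : ℝ :=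
  ∑ η : Config N, bern ρ η * f η

/-- The configuration `η^i`, obtained by flipping `η` at site `i`. -/
def flipAt {N : ℕ} (η : Config N) (i : Fin N) : Config N :=
  Function.update η i (!η i)

/-- Occupation at the 1-indexed position `k ∈ {0,…,N+1}`, with boundary value
`bl` at `k = 0` and `br` at `k = N+1` (and beyond). -/
noncomputable def occAt {N : ℕ} (η : Config N) (bl br : ℝ) (k : ℕ) : ℝ :=
  if hk : k = 0 then bl
  else if h : k ≤ N then (if η ⟨k - 1, by omega⟩ then 1 else 0) else br

/-- The three kinetically constrained models considered: East (empty right boundary),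
FA-1f with two empty boundaries, FA-1f with one empty (right) boundary. -/
inductive KCM | east | fa2 | fa1

/-- The kinetic constraint `r_i(η)` of each model, at the (0-indexed) site `i`. -/
noncomputable def constr (m : KCM) {N : ℕ} (η : Config N) (i : Fin N) : ℝ :=
  match m with
  | KCM.east => 1 - occAt η 0 0 (i.1 + 2)
  | KCM.fa2  => 1 - occAt η 0 0 i.1 * occAt η 0 0 (i.1 + 2)
  | KCM.fa1  => 1 - occAt η 1 0 i.1 * occAt η 1 0 (i.1 + 2)

/-- The jump rate `c_i(η) = r_i(η)·[η_i(1−ρ)+(1−η_i)ρ]`. -/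
noncomputable def crate (m : KCM) (ρ : ℝ) {N : ℕ} (η : Config N) (i : Fin N) : ℝ :=
  constr m η i * (if η i then 1 - ρ else ρ)

/-- The escape rate `𝓗(η) = Σ_i c_i(η)`. -/
noncomputable def escRate (m : KCM) (ρ : ℝ) {N : ℕ} (η : Config N) : ℝ :=
  ∑ i, crate m ρ η i

/-- The Dirichlet form `𝒟_N(g) = Σ_i ν(c_i(η)(g(η^i)−g(η))²)`. -/
noncomputable def dirichlet (m : KCM) (ρ : ℝ) {N : ℕ} (g : Config N → ℝ) : ℝ :=
  ∑ i, expect ρ (fun η => crate m ρ η i * (g (flipAt η i) - g η) ^ 2)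

/-- The rescaled cumulant generating function `φ^{(N)}(λ)`, via the
Donsker–Varadhan variational (principal eigenvalue) formula. -/
noncomputable def phi (m : KCM) (ρ : ℝ) (N : ℕ) (lam : ℝ) : ℝ :=
  sSup { x | ∃ f : Config N → ℝ, (∀ η, 0 ≤ f η) ∧ expect ρ f = 1 ∧
    x = (Real.exp lam - 1) * expect ρ (fun η => f η * escRate m ρ η)
        - Real.exp lam * dirichlet m ρ (fun η => Real.sqrt (f η)) }

/-- The mean instantaneous activity `𝔸 = ν(c_j)` at an interior site `j`:
`2ρ(1−ρ)²` for East and `2ρ(1−ρ)(1−ρ²)` for FA-1f. -/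
noncomputable def meanAct (m : KCM) (ρ : ℝ) : ℝ :=
  match m with
  | KCM.east => 2 * ρ * (1 - ρ) ^ 2
  | _ => 2 * ρ * (1 - ρ) * (1 - ρ ^ 2)

/-- The two-boundary interface energy `Σ_{L,L'}` for FA-1f with two empty
boundaries: the infimum of `𝒟_{L+L'+2}(√f)` over probability densities `f`
with `ν(f·η_{L+1}η_{L+2}) = 1`. -/
noncomputable def SigmaTwo (ρ : ℝ) (L L' : ℕ) : ℝ :=
  sInf { x | ∃ f : Config (L + L' + 2) → ℝ, (∀ η, 0 ≤ f η) ∧ expect ρ f = 1 ∧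
    expect ρ (fun η => f η * occ η ⟨L, by omega⟩ * occ η ⟨L + 1, by omega⟩) = 1 ∧
    x = dirichlet KCM.fa2 ρ (fun η => Real.sqrt (f η)) }

/-- The one-boundary interface energy `Σ_L`: the infimum of `𝒟_L(√f)`
over probability densities `f` with `ν(f·η_1) = 1`, for the model `m`. -/
noncomputable def SigmaOne (m : KCM) (ρ : ℝ) (L : ℕ) : ℝ :=
  sInf { x | ∃ f : Config L → ℝ, (∀ η, 0 ≤ f η) ∧ expect ρ f = 1 ∧
    expect ρ (fun η => f η * occAt η 0 0 1) = 1 ∧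
    x = dirichlet m ρ (fun η => Real.sqrt (f η)) }
/-- The rate `c_k(η)` at the 0-indexed site `k : ℕ` (`0` if `k` is out of range). -/
noncomputable def crateNat (m : KCM) (ρ : ℝ) {N : ℕ} (η : Config N) (k : ℕ) : ℝ :=
  if h : k < N then crate m ρ η ⟨k, h⟩ else 0

/-- The constraint `r_k(η)` at the 0-indexed site `k : ℕ` (`0` if `k` is out of range). -/
noncomputable def constrNat (m : KCM) {N : ℕ} (η : Config N) (k : ℕ) : ℝ :=
  if h : k < N then constr m η ⟨k, h⟩ else 0

/-- The (0-indexed) block `B_{b+1} = {bK+1,…,(b+1)K}` is completely filled. -/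
def blockFull {N : ℕ} (K b : ℕ) (η : Config N) : Prop :=
  ∀ x : Fin N, b * K ≤ x.1 → x.1 < (b + 1) * K → η x = true

/-- The (0-indexed) block `B_{b+1}` contains at least one empty site. -/
def blockHasZero {N : ℕ} (K b : ℕ) (η : Config N) : Prop :=
  ∃ x : Fin N, b * K ≤ x.1 ∧ x.1 < (b + 1) * K ∧ η x = false

/-- The 0-indexed offsets (within a block of size `K`) of the sites of `B̃_i`,
whose constraint only depends on the configuration inside the block:
all but the last site for East, all but the first and last sites for FA-1f. -/
def interiorIdx (m : KCM) (K : ℕ) : Finset ℕ :=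
  match m with
  | KCM.east => Finset.range (K - 1)
  | _ => Finset.Ioo 0 (K - 1)

/-- The block activity `𝓗_i(η) = Σ_{x∈B̃_i} c_x(η)` for the 0-indexed block `b`. -/
noncomputable def blockAct (m : KCM) (ρ : ℝ) {N : ℕ} (K b : ℕ) (η : Config N) : ℝ :=
  ∑ j ∈ interiorIdx m K, crateNat m ρ η (b * K + j)

/-- The block density `𝓡_i(η) = K^{-1} Σ_{x∈B_i} η_x` for the 0-indexed block `b`. -/
noncomputable def blockDens {N : ℕ} (K b : ℕ) (η : Config N) : ℝ :=
  (∑ j ∈ Finset.range K, occAt η 0 0 (b * K + j + 1)) / K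

/-- The activity-density label `u^i_{K,ε}(η)` of the 0-indexed block `b`. -/
noncomputable def label (m : KCM) (ρ ε : ℝ) {N : ℕ} (K : ℕ) (η : Config N) (b : ℕ) : ℤ :=
  if blockFull K b η then 1
  else if |blockAct m ρ K b η - meanAct m ρ * ((interiorIdx m K).card : ℝ)| ≤ ε * K ∧
          |blockDens K b η - ρ| ≤ ε then -1
  else 0

/-- Indicator of the event `𝓔_i = {u^i_{K,ε} ∈ {0,1}}` for the 0-indexed block `b`. -/
noncomputable def indE (m : KCM) (ρ ε : ℝ) {N : ℕ} (K : ℕ) (η : Config N) (b : ℕ) : ℝ :=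
  if label m ρ ε K η b ≠ -1 then 1 else 0

/-- Indicator of the event `𝓩_i` that the 0-indexed block `b` has an empty site. -/
noncomputable def indZ {N : ℕ} (K : ℕ) (η : Config N) (b : ℕ) : ℝ :=
  if blockHasZero K b η then 1 else 0

/-- The function `V(η) = Σ_{i=1}^{N/K−1} 1_{𝓔_i}1_{𝓩_{i+1}} + 1_{𝓔_{N/K}}`. -/
noncomputable def Vfun (m : KCM) (ρ ε : ℝ) {N : ℕ} (K : ℕ) (η : Config N) : ℝ :=
  (∑ b ∈ Finset.range (N / K - 1), indE m ρ ε K η b * indZ K η (b + 1))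
    + indE m ρ ε K η (N / K - 1)

/-- Conditional expectation in the coordinates of `B` w.r.t. Bernoulli(ρ),
the coordinates outside `B` being held fixed. -/
noncomputable def condExp (ρ : ℝ) {N : ℕ} (B : Finset (Fin N)) (g : Config N → ℝ)
    (η : Config N) : ℝ :=
  ∑ ζ : {x // x ∈ B} → Bool,
    (∏ i : {x // x ∈ B}, (if ζ i then ρ else 1 - ρ)) *
      g (fun j => if h : j ∈ B then ζ ⟨j, h⟩ else η j)

/-- Conditional variance `Var_B(g)(η)` in the coordinates of `B`. -/
noncomputable def condVar (ρ : ℝ) {N : ℕ} (B : Finset (Fin N)) (g : Config N → ℝ)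
    (η : Config N) : ℝ :=
  condExp ρ B (fun σ => g σ ^ 2) η - (condExp ρ B g η) ^ 2

/-- The 0-indexed block `b` as a `Finset (Fin N)`. -/
def blockSet (N K b : ℕ) : Finset (Fin N) :=
  Finset.univ.filter fun x => b * K ≤ x.1 ∧ x.1 < (b + 1) * K

/-- The model whose Dirichlet form on finite intervals with empty right boundary
condition appears in the uniform spectral gap hypothesis: East for East,
FA-1f with one empty (right) boundary for FA-1f. -/
def gapModel : KCM → KCM
  | KCM.east => KCM.east
  | _ => KCM.fa1


/-! ### Auxiliary lemmas for the proof -/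

section AuxCore

variable {ρ : ℝ}

private lemma expect_def {N : ℕ} (g : Config N → ℝ) :
    expect ρ g = ∑ η : Config N, bern ρ η * g η := rfl

private lemma wt_nonneg (hρ0 : 0 < ρ) (hρ1 : ρ < 1) (b : Bool) :
    0 ≤ (if b then ρ else 1 - ρ) := by cases b <;> simp <;> linarith

private lemma sum_prod_wt {ι : Type*} [DecidableEq ι] [Fintype ι] :
    ∑ g : ι → Bool, ∏ i : ι, (if g i then ρ else 1 - ρ) = 1 := by
  classical
  have h := Finset.prod_univ_sum (fun _ : ι => (Finset.univ : Finset Bool))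
      (fun _ b => if b then ρ else 1 - ρ)
  rw [Fintype.piFinset_univ] at h
  rw [← h]
  have h2 : ∀ _i : ι, ∑ b : Bool, (if b then ρ else 1 - ρ) = 1 := by
    intro i; rw [Fintype.sum_bool]; norm_num
  simp [h2]

private lemma bern_nonneg (hρ0 : 0 < ρ) (hρ1 : ρ < 1) {N : ℕ} (η : Config N) :
    0 ≤ bern ρ η :=
  Finset.prod_nonneg fun i _ => wt_nonneg hρ0 hρ1 _

private lemma expect_nonneg (hρ0 : 0 < ρ) (hρ1 : ρ < 1) {N : ℕ} {g : Config N → ℝ}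
    (hg : ∀ η, 0 ≤ g η) : 0 ≤ expect ρ g :=
  Finset.sum_nonneg fun η _ => mul_nonneg (bern_nonneg hρ0 hρ1 η) (hg η)

private lemma expect_mono (hρ0 : 0 < ρ) (hρ1 : ρ < 1) {N : ℕ} {g h : Config N → ℝ}
    (hgh : ∀ η, g η ≤ h η) : expect ρ g ≤ expect ρ h :=
  Finset.sum_le_sum fun η _ =>
    mul_le_mul_of_nonneg_left (hgh η) (bern_nonneg hρ0 hρ1 η)

private lemma bern_def {N : ℕ} (η : Config N) :
    bern ρ η = ∏ i, (if η i then ρ else 1 - ρ) := rfl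

private lemma expect_one {N : ℕ} : expect ρ (fun _ : Config N => 1) = 1 := by
  rw [expect_def]
  simp only [mul_one, bern_def]
  exact sum_prod_wt (ι := Fin N)

private lemma expect_add {N : ℕ} (g h : Config N → ℝ) :
    expect ρ (fun η => g η + h η) = expect ρ g + expect ρ h := by
  simp only [expect_def, mul_add, Finset.sum_add_distrib]

private lemma expect_sum {N : ℕ} {α : Type*} (s : Finset α) (g : α → Config N → ℝ) :
    expect ρ (fun η => ∑ a ∈ s, g a η) = ∑ a ∈ s, expect ρ (g a) := by
  simp only [expect_def, Finset.mul_sum]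
  exact Finset.sum_comm

/-- Abstract covariance bound: for a finite probability space with weights `w`,
a nonnegative `φ` and `ψ` with values in `[0,1]`,
`E[φψ] ≤ E[φ]E[ψ] + 2√(E[φ])·√(E[φ] − E[√φ]²)`. -/
private lemma cov_bound {ι : Type*} [Fintype ι] (w φ ψ : ι → ℝ)
    (hw : ∀ i, 0 ≤ w i) (hw1 : ∑ i, w i = 1)
    (hφ : ∀ i, 0 ≤ φ i) (hψ0 : ∀ i, 0 ≤ ψ i) (hψ1 : ∀ i, ψ i ≤ 1) :
    ∑ i, w i * (φ i * ψ i) ≤ (∑ i, w i * φ i) * (∑ i, w i * ψ i)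
      + 2 * Real.sqrt (∑ i, w i * φ i) *
        Real.sqrt ((∑ i, w i * φ i) - (∑ i, w i * Real.sqrt (φ i)) ^ 2) := by
  classical
  set h : ι → ℝ := fun i => Real.sqrt (φ i) with hh
  have hsq : ∀ i, h i ^ 2 = φ i := fun i => Real.sq_sqrt (hφ i)
  have hnn : ∀ i, 0 ≤ h i := fun i => Real.sqrt_nonneg _
  set A : ℝ := ∑ i, w i * φ i with hA
  set a : ℝ := ∑ i, w i * h i with ha
  set q : ℝ := ∑ i, w i * ψ i with hq
  have hAnn : 0 ≤ A := Finset.sum_nonneg fun i _ => mul_nonneg (hw i) (hφ i)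
  have hann : 0 ≤ a := Finset.sum_nonneg fun i _ => mul_nonneg (hw i) (hnn i)
  have hq0 : 0 ≤ q := Finset.sum_nonneg fun i _ => mul_nonneg (hw i) (hψ0 i)
  have hq1 : q ≤ 1 := by
    calc q ≤ ∑ i, w i * 1 := Finset.sum_le_sum fun i _ =>
            mul_le_mul_of_nonneg_left (hψ1 i) (hw i)
    _ = 1 := by simpa using hw1
  -- a² ≤ A by Cauchy–Schwarz
  have haA : a ^ 2 ≤ A := by
    have hcs := sum_mul_sq_le_sq_mul_sq Finset.univ
        (fun i => Real.sqrt (w i)) (fun i => Real.sqrt (w i) * h i)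
    have e1 : ∀ i, Real.sqrt (w i) * (Real.sqrt (w i) * h i) = w i * h i := by
      intro i; rw [← mul_assoc, Real.mul_self_sqrt (hw i)]
    have e2 : ∀ i, (Real.sqrt (w i)) ^ 2 = w i := fun i => Real.sq_sqrt (hw i)
    have e3 : ∀ i, (Real.sqrt (w i) * h i) ^ 2 = w i * φ i := by
      intro i; rw [mul_pow, e2 i, hsq i]
    rw [Finset.sum_congr rfl (fun i _ => e1 i), Finset.sum_congr rfl (fun i _ => e2 i),
      Finset.sum_congr rfl (fun i _ => e3 i), hw1, one_mul] at hcs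
    exact hcs
  -- variance identities
  have evar : ∑ i, w i * (h i - a) ^ 2 = A - a ^ 2 := by
    have e : ∀ i, w i * (h i - a) ^ 2
        = w i * φ i - 2 * a * (w i * h i) + a ^ 2 * w i := by
      intro i; rw [← hsq i]; ring
    rw [Finset.sum_congr rfl (fun i _ => e i)]
    rw [Finset.sum_add_distrib, Finset.sum_sub_distrib, ← Finset.mul_sum, ← Finset.mul_sum,
      hw1, ← ha, ← hA]
    ring
  have eplus : ∑ i, w i * (h i + a) ^ 2 = A + 3 * a ^ 2 := by
    have e : ∀ i, w i * (h i + a) ^ 2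
        = w i * φ i + 2 * a * (w i * h i) + a ^ 2 * w i := by
      intro i; rw [← hsq i]; ring
    rw [Finset.sum_congr rfl (fun i _ => e i)]
    rw [Finset.sum_add_distrib, Finset.sum_add_distrib, ← Finset.mul_sum, ← Finset.mul_sum,
      hw1, ← ha, ← hA]
    ring
  -- covariance identity
  have ecov : ∑ i, w i * (φ i * ψ i)
      = A * q + ∑ i, w i * ((h i - a) * (h i + a) * (ψ i - q)) := by
    have e : ∀ i, w i * ((h i - a) * (h i + a) * (ψ i - q))
        = w i * (φ i * ψ i) - q * (w i * φ i) - a ^ 2 * (w i * ψ i)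
          + (a ^ 2 * q) * w i := by
      intro i; rw [← hsq i]; ring
    rw [Finset.sum_congr rfl (fun i _ => e i)]
    rw [Finset.sum_add_distrib, Finset.sum_sub_distrib, Finset.sum_sub_distrib,
      ← Finset.mul_sum, ← Finset.mul_sum, ← Finset.mul_sum, hw1, ← hq, ← hA]
    ring
  -- bound the covariance term
  have hptw : ∀ i, w i * ((h i - a) * (h i + a) * (ψ i - q))
      ≤ (Real.sqrt (w i) * |h i - a|) * (Real.sqrt (w i) * (h i + a)) := by
    intro i
    have habs : (h i - a) * (ψ i - q) ≤ |h i - a| := by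
      calc (h i - a) * (ψ i - q) ≤ |(h i - a) * (ψ i - q)| := le_abs_self _
        _ = |h i - a| * |ψ i - q| := abs_mul _ _
        _ ≤ |h i - a| * 1 := by
            apply mul_le_mul_of_nonneg_left _ (abs_nonneg _)
            rw [abs_le]; constructor <;> nlinarith [hψ0 i, hψ1 i]
        _ = |h i - a| := mul_one _
    have hwa : 0 ≤ w i * (h i + a) := mul_nonneg (hw i) (add_nonneg (hnn i) hann)
    have := mul_le_mul_of_nonneg_left habs hwa
    calc w i * ((h i - a) * (h i + a) * (ψ i - q))
        = w i * (h i + a) * ((h i - a) * (ψ i - q)) := by ring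
      _ ≤ w i * (h i + a) * |h i - a| := this
      _ = (Real.sqrt (w i) * |h i - a|) * (Real.sqrt (w i) * (h i + a)) := by
          rw [show (Real.sqrt (w i) * |h i - a|) * (Real.sqrt (w i) * (h i + a))
            = (Real.sqrt (w i) * Real.sqrt (w i)) * (|h i - a| * (h i + a)) by ring,
            Real.mul_self_sqrt (hw i)]; ring
  have hcs2 : ∑ i, (Real.sqrt (w i) * |h i - a|) * (Real.sqrt (w i) * (h i + a))
      ≤ Real.sqrt (A - a ^ 2) * (2 * Real.sqrt A) := by
    have := Real.sum_mul_le_sqrt_mul_sqrt Finset.univ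
      (fun i => Real.sqrt (w i) * |h i - a|) (fun i => Real.sqrt (w i) * (h i + a))
    have e1 : ∀ i, (Real.sqrt (w i) * |h i - a|) ^ 2 = w i * (h i - a) ^ 2 := by
      intro i; rw [mul_pow, Real.sq_sqrt (hw i), sq_abs]
    have e2 : ∀ i, (Real.sqrt (w i) * (h i + a)) ^ 2 = w i * (h i + a) ^ 2 := by
      intro i; rw [mul_pow, Real.sq_sqrt (hw i)]
    rw [Finset.sum_congr rfl (fun i _ => e1 i), Finset.sum_congr rfl (fun i _ => e2 i),
      evar, eplus] at this
    refine le_trans this ?_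
    apply mul_le_mul_of_nonneg_left _ (Real.sqrt_nonneg _)
    have h4 : A + 3 * a ^ 2 ≤ 4 * A := by nlinarith
    calc Real.sqrt (A + 3 * a ^ 2) ≤ Real.sqrt (4 * A) := Real.sqrt_le_sqrt h4
      _ = 2 * Real.sqrt A := by
          rw [show (4 : ℝ) * A = 2 ^ 2 * A by ring,
            Real.sqrt_mul (by positivity) A, Real.sqrt_sq (by norm_num)]
  calc ∑ i, w i * (φ i * ψ i)
      = A * q + ∑ i, w i * ((h i - a) * (h i + a) * (ψ i - q)) := ecov
    _ ≤ A * q + Real.sqrt (A - a ^ 2) * (2 * Real.sqrt A) := by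
        refine add_le_add (le_refl _) (le_trans (Finset.sum_le_sum fun i _ => hptw i) hcs2)
    _ = A * q + 2 * Real.sqrt A * Real.sqrt (A - a ^ 2) := by ring

end AuxCore


section Factor

variable {ρ : ℝ} {N : ℕ}

private lemma condExp_def (B : Finset (Fin N)) (g : Config N → ℝ) (η : Config N) :
    condExp ρ B g η = ∑ ζ : {x // x ∈ B} → Bool,
      (∏ i : {x // x ∈ B}, (if ζ i then ρ else 1 - ρ)) *
        g (fun j => if h : j ∈ B then ζ ⟨j, h⟩ else η j) := rfl

private lemma expect_const (c : ℝ) : expect ρ (fun _ : Config N => c) = c := by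
  have h1 : expect ρ (fun _ : Config N => c) = expect ρ (fun _ : Config N => 1) * c := by
    rw [expect_def, expect_def, Finset.sum_mul]
    exact Finset.sum_congr rfl fun η _ => by ring
  rw [h1, expect_one, one_mul]

/-- Factorization: if `Θ` does not depend on the coordinates in `B`, then
`ν(Θ · ν_B(g)) = ν(Θ·g)`. -/
private lemma expect_mul_condExp (B : Finset (Fin N)) (Θ g : Config N → ℝ)
    (hΘ : ∀ (η : Config N) (ζ : {x // x ∈ B} → Bool),
        Θ (fun j => if h : j ∈ B then ζ ⟨j, h⟩ else η j) = Θ η) :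
    expect ρ (fun η => Θ η * condExp ρ B g η) = expect ρ (fun η => Θ η * g η) := by
  classical
  set e := Equiv.piEquivPiSubtypeProd (fun j : Fin N => j ∈ B) (fun _ => Bool) with he
  have key : ∀ F : Config N → ℝ, (∑ η : Config N, F η)
      = ∑ ζ : {x // x ∈ B} → Bool, ∑ ξ : {x // ¬ x ∈ B} → Bool, F (e.symm (ζ, ξ)) := by
    intro F
    have h1 : (∑ η : Config N, F η)
        = ∑ q : ({x // x ∈ B} → Bool) × ({x // ¬ x ∈ B} → Bool), F (e.symm q) :=
      Fintype.sum_bijective e e.bijective _ _ fun η => by simp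
    rw [h1, Fintype.sum_prod_type]
  -- patch identity
  have hpatch : ∀ (ζ ζ' : {x // x ∈ B} → Bool) (ξ : {x // ¬ x ∈ B} → Bool),
      (fun j => if h : j ∈ B then ζ' ⟨j, h⟩ else (e.symm (ζ, ξ)) j) = e.symm (ζ', ξ) := by
    intro ζ ζ' ξ
    funext j
    by_cases h : j ∈ B
    · simp [he, h]
    · simp [he, h]
  -- bern factorization
  have hbern : ∀ (ζ : {x // x ∈ B} → Bool) (ξ : {x // ¬ x ∈ B} → Bool),
      bern ρ (e.symm (ζ, ξ)) = (∏ i : {x // x ∈ B}, (if ζ i then ρ else 1 - ρ)) *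
        ∏ i : {x // ¬ x ∈ B}, (if ξ i then ρ else 1 - ρ) := by
    intro ζ ξ
    rw [bern_def, ← Fintype.prod_subtype_mul_prod_subtype (fun j : Fin N => j ∈ B)
      (fun j => if (e.symm (ζ, ξ)) j then ρ else 1 - ρ)]
    congr 1
    · refine Finset.prod_congr (by ext i; simp) fun i _ => ?_
      simp [he, i.2]
    · refine Finset.prod_congr (by ext i; simp) fun i _ => ?_
      simp [he, i.2]
  -- Θ only depends on the second component
  have hTh : ∀ (ζ ζ' : {x // x ∈ B} → Bool) (ξ : {x // ¬ x ∈ B} → Bool),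
      Θ (e.symm (ζ, ξ)) = Θ (e.symm (ζ', ξ)) := by
    intro ζ ζ' ξ
    rw [← hpatch ζ' ζ ξ]
    exact hΘ (e.symm (ζ', ξ)) ζ
  -- condExp at a split point
  have hce : ∀ (ζ : {x // x ∈ B} → Bool) (ξ : {x // ¬ x ∈ B} → Bool),
      condExp ρ B g (e.symm (ζ, ξ)) = ∑ ζ' : {x // x ∈ B} → Bool,
        (∏ i : {x // x ∈ B}, (if ζ' i then ρ else 1 - ρ)) * g (e.symm (ζ', ξ)) := by
    intro ζ ξ
    rw [condExp_def]
    exact Finset.sum_congr rfl fun ζ' _ => by rw [hpatch ζ ζ' ξ]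
  rw [expect_def, expect_def, key, key]
  calc ∑ ζ : {x // x ∈ B} → Bool, ∑ ξ : {x // ¬ x ∈ B} → Bool,
        bern ρ (e.symm (ζ, ξ)) * (Θ (e.symm (ζ, ξ)) * condExp ρ B g (e.symm (ζ, ξ)))
      = ∑ ξ : {x // ¬ x ∈ B} → Bool, ∑ ζ : {x // x ∈ B} → Bool,
        bern ρ (e.symm (ζ, ξ)) * (Θ (e.symm (ζ, ξ)) * condExp ρ B g (e.symm (ζ, ξ))) :=
        Finset.sum_comm
    _ = ∑ ξ : {x // ¬ x ∈ B} → Bool, ∑ ζ : {x // x ∈ B} → Bool,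
        bern ρ (e.symm (ζ, ξ)) * (Θ (e.symm (ζ, ξ)) * g (e.symm (ζ, ξ))) := by
        refine Finset.sum_congr rfl fun ξ _ => ?_
        set ζ0 : {x // x ∈ B} → Bool := fun _ => true with hζ0
        set G : ℝ := ∑ ζ' : {x // x ∈ B} → Bool,
          (∏ i : {x // x ∈ B}, (if ζ' i then ρ else 1 - ρ)) * g (e.symm (ζ', ξ)) with hG
        set W2 : ℝ := ∏ i : {x // ¬ x ∈ B}, (if ξ i then ρ else 1 - ρ) with hW2
        have l1 : ∀ ζ : {x // x ∈ B} → Bool,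
            bern ρ (e.symm (ζ, ξ)) * (Θ (e.symm (ζ, ξ)) * condExp ρ B g (e.symm (ζ, ξ)))
            = (∏ i : {x // x ∈ B}, (if ζ i then ρ else 1 - ρ))
              * (W2 * (Θ (e.symm (ζ0, ξ)) * G)) := by
          intro ζ
          rw [hbern, hce ζ ξ, hTh ζ ζ0 ξ, ← hG, ← hW2]; ring
        have l2 : ∀ ζ : {x // x ∈ B} → Bool,
            bern ρ (e.symm (ζ, ξ)) * (Θ (e.symm (ζ, ξ)) * g (e.symm (ζ, ξ)))
            = (W2 * Θ (e.symm (ζ0, ξ)))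
              * ((∏ i : {x // x ∈ B}, (if ζ i then ρ else 1 - ρ)) * g (e.symm (ζ, ξ))) := by
          intro ζ
          rw [hbern, hTh ζ ζ0 ξ, ← hW2]; ring
        rw [Finset.sum_congr rfl fun ζ _ => l1 ζ, Finset.sum_congr rfl fun ζ _ => l2 ζ,
          ← Finset.sum_mul, sum_prod_wt, one_mul, ← Finset.mul_sum, ← hG]
        ring
    _ = ∑ ζ : {x // x ∈ B} → Bool, ∑ ξ : {x // ¬ x ∈ B} → Bool,
        bern ρ (e.symm (ζ, ξ)) * (Θ (e.symm (ζ, ξ)) * g (e.symm (ζ, ξ))) := Finset.sum_comm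

private lemma expect_congr {g h : Config N → ℝ} (e : ∀ η, g η = h η) :
    expect ρ g = expect ρ h := by
  rw [expect_def, expect_def]
  exact Finset.sum_congr rfl fun η _ => by rw [e η]

private lemma condExp_indep (B : Finset (Fin N)) (χ : Config N → ℝ)
    (hχ : ∀ (η η' : Config N), (∀ j : Fin N, j ∈ B → η j = η' j) → χ η = χ η')
    (η η' : Config N) : condExp ρ B χ η = condExp ρ B χ η' := by
  rw [condExp_def, condExp_def]
  refine Finset.sum_congr rfl fun ζ _ => ?_
  congr 1
  apply hχ
  intro j hj
  rw [dif_pos hj, dif_pos hj]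

private lemma condExp_eq_expect (B : Finset (Fin N)) (χ : Config N → ℝ)
    (hχ : ∀ (η η' : Config N), (∀ j : Fin N, j ∈ B → η j = η' j) → χ η = χ η')
    (η : Config N) : condExp ρ B χ η = expect ρ χ := by
  have h1 : expect ρ χ = expect ρ (fun η' => (1 : ℝ) * condExp ρ B χ η') := by
    rw [expect_mul_condExp B (fun _ => 1) χ (fun _ _ => rfl)]
    exact (expect_congr fun η' => (one_mul _).symm)
  have h2 : expect ρ (fun η' => (1 : ℝ) * condExp ρ B χ η')
      = expect ρ (fun _ : Config N => condExp ρ B χ η) :=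
    expect_congr fun η' => by rw [one_mul]; exact condExp_indep B χ hχ η' η
  rw [h1, h2, expect_const]

end Factor

section Bridge

variable {ρ : ℝ} {N : ℕ}

/-- The interval `[a, c)` as a finset of `Fin N`. -/
private def ivl (N a c : ℕ) : Finset (Fin N) :=
  Finset.univ.filter fun x => a ≤ x.1 ∧ x.1 < c

private lemma mem_ivl {a c : ℕ} {i : Fin N} : i ∈ ivl N a c ↔ a ≤ i.1 ∧ i.1 < c := by
  simp [ivl]

/-- Embedding a configuration of the interval `[a, c)` into a background `η`. -/
private def embed (a c : ℕ) (η : Config N) (ξ : Config (c - a)) : Config N :=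
  fun i => if h : a ≤ i.1 ∧ i.1 < c then ξ ⟨i.1 - a, by omega⟩ else η i

private lemma embed_eq_patch (a c : ℕ) (hc : c ≤ N) (η : Config N) (ξ : Config (c - a)) :
    embed a c η ξ = fun j => if h : j ∈ ivl N a c then
      ξ ⟨j.1 - a, by rw [mem_ivl] at h; omega⟩ else η j := by
  funext j
  by_cases h : a ≤ j.1 ∧ j.1 < c
  · rw [embed, dif_pos h, dif_pos (mem_ivl.mpr h)]
  · rw [embed, dif_neg h, dif_neg (fun hm => h (mem_ivl.mp hm))]

/-- Transporting the conditional expectation over the interval `[a,c)` to an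
expectation over `Config (c-a)`. -/
private lemma condExp_eq_expect_embed (a c : ℕ) (hc : c ≤ N) (G : Config N → ℝ)
    (η : Config N) :
    condExp ρ (ivl N a c) G η
      = expect ρ (fun ξ : Config (c - a) => G (embed a c η ξ)) := by
  classical
  set B := ivl N a c with hB
  have hlt : ∀ j : Fin (c - a), a + j.1 < N := by
    intro j; have := j.2; omega
  have hmem : ∀ j : Fin (c - a), (⟨a + j.1, hlt j⟩ : Fin N) ∈ B := by
    intro j
    rw [hB, mem_ivl]
    have := j.2
    refine ⟨?_, ?_⟩
    · show a ≤ a + j.1; omega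
    · show a + j.1 < c; omega
  set e : Fin (c - a) ≃ {x // x ∈ B} :=
    { toFun := fun j => ⟨⟨a + j.1, hlt j⟩, hmem j⟩
      invFun := fun x => ⟨x.1.1 - a, by have := (mem_ivl.mp x.2); omega⟩
      left_inv := by
        intro j; apply Fin.ext; show a + j.1 - a = j.1; omega
      right_inv := by
        intro x
        apply Subtype.ext; apply Fin.ext
        have := (mem_ivl.mp x.2)
        show a + (x.1.1 - a) = x.1.1; omega } with he
  rw [condExp_def, expect_def]
  refine Fintype.sum_equiv (Equiv.arrowCongr e (Equiv.refl Bool)).symm _ _ ?_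
  intro ζ
  have harg : (Equiv.arrowCongr e (Equiv.refl Bool)).symm ζ
      = fun j : Fin (c - a) => ζ (e j) := by
    funext j; simp [Equiv.arrowCongr]
  have hw : (∏ i : {x // x ∈ B}, (if ζ i then ρ else 1 - ρ))
      = bern ρ (fun j : Fin (c - a) => ζ (e j)) := by
    rw [bern_def]
    exact (Equiv.prod_comp e (fun x => if ζ x then ρ else 1 - ρ)).symm
  have hpatch : (fun j => if h : j ∈ B then ζ ⟨j, h⟩ else η j)
      = embed a c η (fun j : Fin (c - a) => ζ (e j)) := by
    funext i
    by_cases h : a ≤ i.1 ∧ i.1 < c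
    · rw [dif_pos (by rw [hB] at *; exact mem_ivl.mpr h), embed,
        dif_pos h]
      have hei : e ⟨i.1 - a, by omega⟩ = ⟨i, by rw [hB]; exact mem_ivl.mpr h⟩ := by
        apply Subtype.ext; apply Fin.ext
        show a + (i.1 - a) = i.1; omega
      rw [hei]
    · rw [dif_neg (by rw [hB]; exact fun hm => h (mem_ivl.mp hm)), embed, dif_neg h]
  rw [harg, hw, hpatch]

end Bridge



section Rates

variable {ρ : ℝ} {N : ℕ}

private lemma occAt_zero (η : Config N) (bl br : ℝ) : occAt η bl br 0 = bl := by
  rw [occAt]; simp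

private lemma occAt_high (η : Config N) (bl br : ℝ) {k : ℕ} (h : N < k) :
    occAt η bl br k = br := by
  rw [occAt, dif_neg (by omega), dif_neg (by omega)]

private lemma occAt_eq_occ (η : Config N) (bl br : ℝ) {k : ℕ} (i : Fin N)
    (h1 : 1 ≤ k) (h2 : k ≤ N) (hik : i.1 + 1 = k) :
    occAt η bl br k = (if η i then (1 : ℝ) else 0) := by
  rw [occAt, dif_neg (by omega), dif_pos h2]
  have he : (⟨k - 1, by omega⟩ : Fin N) = i := Fin.ext (by show k - 1 = i.1; omega)
  rw [he]

private lemma wtf_nonneg (hρ0 : 0 < ρ) (hρ1 : ρ < 1) (b : Bool) :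
    0 ≤ (if b then 1 - ρ else ρ) := by cases b <;> simp <;> linarith

private lemma occAt_nonneg (η : Config N) {bl br : ℝ} (hbl : 0 ≤ bl) (hbr : 0 ≤ br)
    (k : ℕ) : 0 ≤ occAt η bl br k := by
  rw [occAt]; split_ifs <;> first | assumption | norm_num

private lemma occAt_le_one (η : Config N) {bl br : ℝ} (hbl : bl ≤ 1) (hbr : br ≤ 1)
    (k : ℕ) : occAt η bl br k ≤ 1 := by
  rw [occAt]; split_ifs <;> first | assumption | norm_num

/-- Rate comparison: on the interval `[a,c)` with an empty site at `c` (or `c = N`),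
the constraints of the gap model on `Config (c-a)` are dominated by the true
constraints. -/
private lemma constr_sub_le (m : KCM) {M a c : ℕ} (hac : a + M = c) (hc : c ≤ N)
    (σ : Config N) (ξ : Config M)
    (hag : ∀ (j : Fin M) (i : Fin N), i.1 = a + j.1 → ξ j = σ i)
    (hbc : c = N ∨ ∃ h : c < N, σ ⟨c, h⟩ = false)
    (j : Fin M) (i : Fin N) (hi : i.1 = a + j.1) :
    constr (gapModel m) ξ j ≤ constr m σ i := by
  have hjM := j.2
  have hiN := i.2
  -- the right occupation factors agree
  have hR : ∀ bl₁ bl₂ : ℝ, occAt ξ bl₁ 0 (j.1 + 2) = occAt σ bl₂ 0 (i.1 + 2) := by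
    intro bl₁ bl₂
    by_cases hj : j.1 + 2 ≤ M
    · rw [occAt_eq_occ ξ bl₁ 0 (⟨j.1 + 1, by omega⟩ : Fin M) (by omega) hj (by simp),
        occAt_eq_occ σ bl₂ 0 (⟨i.1 + 1, by omega⟩ : Fin N) (by omega) (by omega) (by simp),
        hag ⟨j.1 + 1, by omega⟩ ⟨i.1 + 1, by omega⟩ (by simp; omega)]
    · -- j is the last site of the interval
      have hje : j.1 + 1 = M := by omega
      rw [occAt_high ξ bl₁ 0 (by omega)]
      rcases hbc with hcN | ⟨hclt, hfalse⟩
      · rw [occAt_high σ bl₂ 0 (by omega)]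
      · rw [occAt_eq_occ σ bl₂ 0 (⟨c, hclt⟩ : Fin N) (by omega) (by omega) (by show c + 1 = i.1 + 2; omega),
          hfalse]
        simp
  -- the left occupation factors are dominated
  have hL : ∀ bl₂ : ℝ, 0 ≤ bl₂ → bl₂ ≤ 1 →
      occAt σ bl₂ 0 i.1 ≤ occAt ξ 1 0 j.1 := by
    intro bl₂ h0 h1
    by_cases hj0 : j.1 = 0
    · rw [hj0, occAt_zero]
      exact occAt_le_one σ h1 (by norm_num) _
    · rw [occAt_eq_occ ξ 1 0 (⟨j.1 - 1, by omega⟩ : Fin M) (by omega) (by omega) (by show j.1 - 1 + 1 = j.1; omega),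
        occAt_eq_occ σ bl₂ 0 (⟨i.1 - 1, by omega⟩ : Fin N) (by omega) (by omega) (by show i.1 - 1 + 1 = i.1; omega),
        hag ⟨j.1 - 1, by omega⟩ ⟨i.1 - 1, by omega⟩ (by simp; omega)]
  have hRnn : 0 ≤ occAt σ (0:ℝ) 0 (i.1 + 2) := occAt_nonneg σ (by norm_num) (by norm_num) _
  have hRnn1 : 0 ≤ occAt σ (1:ℝ) 0 (i.1 + 2) := occAt_nonneg σ (by norm_num) (by norm_num) _
  cases m
  · -- east
    show (1 : ℝ) - occAt ξ 0 0 (j.1 + 2) ≤ 1 - occAt σ 0 0 (i.1 + 2)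
    rw [hR 0 0]
  · -- fa2
    show (1 : ℝ) - occAt ξ 1 0 j.1 * occAt ξ 1 0 (j.1 + 2)
      ≤ 1 - occAt σ 0 0 i.1 * occAt σ 0 0 (i.1 + 2)
    have h1 := hL 0 (by norm_num) (by norm_num)
    have h2 := hR 1 0
    have h3 : 0 ≤ occAt σ (0:ℝ) 0 i.1 := occAt_nonneg σ (by norm_num) (by norm_num) _
    nlinarith [mul_le_mul_of_nonneg_right h1 hRnn]
  · -- fa1
    show (1 : ℝ) - occAt ξ 1 0 j.1 * occAt ξ 1 0 (j.1 + 2)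
      ≤ 1 - occAt σ 1 0 i.1 * occAt σ 1 0 (i.1 + 2)
    have h1 := hL 1 (by norm_num) (by norm_num)
    have h2 := hR 1 1
    have h3 : 0 ≤ occAt σ (1:ℝ) 0 i.1 := occAt_nonneg σ (by norm_num) (by norm_num) _
    nlinarith [mul_le_mul_of_nonneg_right h1 hRnn1]

private lemma crate_sub_le (hρ0 : 0 < ρ) (hρ1 : ρ < 1) (m : KCM) {M a c : ℕ}
    (hac : a + M = c) (hc : c ≤ N) (σ : Config N) (ξ : Config M)
    (hag : ∀ (j : Fin M) (i : Fin N), i.1 = a + j.1 → ξ j = σ i)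
    (hbc : c = N ∨ ∃ h : c < N, σ ⟨c, h⟩ = false)
    (j : Fin M) (i : Fin N) (hi : i.1 = a + j.1) :
    crate (gapModel m) ρ ξ j ≤ crate m ρ σ i := by
  rw [crate, crate, hag j i hi]
  exact mul_le_mul_of_nonneg_right (constr_sub_le m hac hc σ ξ hag hbc j i hi)
    (wtf_nonneg hρ0 hρ1 _)

end Rates

section Gap

variable {ρ : ℝ} {N : ℕ}

/-- Dirichlet-form summand for site `i` (0 if out of range). -/
private noncomputable def dTerm (m : KCM) (ρ : ℝ) {N : ℕ} (f : Config N → ℝ) (i : ℕ)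
    (σ : Config N) : ℝ :=
  if h : i < N then
    crate m ρ σ ⟨i, h⟩ * (Real.sqrt (f (flipAt σ ⟨i, h⟩)) - Real.sqrt (f σ)) ^ 2
  else 0

private lemma dTerm_nonneg (hρ0 : 0 < ρ) (hρ1 : ρ < 1) (m : KCM) (f : Config N → ℝ)
    (i : ℕ) (σ : Config N) : 0 ≤ dTerm m ρ f i σ := by
  rw [dTerm]
  split_ifs with h
  · refine mul_nonneg ?_ (sq_nonneg _)
    rw [crate]
    refine mul_nonneg ?_ (wtf_nonneg hρ0 hρ1 _)
    rcases m with _ | _ | _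
    · show (0:ℝ) ≤ 1 - occAt σ 0 0 (i + 2)
      have := occAt_le_one σ (bl := 0) (br := 0) (by norm_num) (by norm_num) (i + 2)
      linarith
    · show (0:ℝ) ≤ 1 - occAt σ 0 0 i * occAt σ 0 0 (i + 2)
      have h1 := occAt_le_one σ (bl := 0) (br := 0) (by norm_num) (by norm_num) i
      have h2 := occAt_le_one σ (bl := 0) (br := 0) (by norm_num) (by norm_num) (i + 2)
      have h3 := occAt_nonneg σ (bl := 0) (br := 0) (by norm_num) (by norm_num) i
      have h4 := occAt_nonneg σ (bl := 0) (br := 0) (by norm_num) (by norm_num) (i + 2)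
      nlinarith
    · show (0:ℝ) ≤ 1 - occAt σ 1 0 i * occAt σ 1 0 (i + 2)
      have h1 := occAt_le_one σ (bl := 1) (br := 0) (by norm_num) (by norm_num) i
      have h2 := occAt_le_one σ (bl := 1) (br := 0) (by norm_num) (by norm_num) (i + 2)
      have h3 := occAt_nonneg σ (bl := 1) (br := 0) (by norm_num) (by norm_num) i
      have h4 := occAt_nonneg σ (bl := 1) (br := 0) (by norm_num) (by norm_num) (i + 2)
      nlinarith
  · exact le_refl 0

private lemma condVar_def (B : Finset (Fin N)) (g : Config N → ℝ) (η : Config N) :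
    condVar ρ B g η = condExp ρ B (fun σ => g σ ^ 2) η - (condExp ρ B g η) ^ 2 := rfl

private lemma dirichlet_def {M : ℕ} (m : KCM) (g : Config M → ℝ) :
    dirichlet m ρ g = ∑ j : Fin M,
      expect ρ (fun ξ => crate m ρ ξ j * (g (flipAt ξ j) - g ξ) ^ 2) := rfl

private lemma embed_agree (a c : ℕ) (η : Config N) (ξ : Config (c - a))
    (j : Fin (c - a)) (i : Fin N) (hi : i.1 = a + j.1) :
    ξ j = embed a c η ξ i := by
  have hj2 := j.2
  rw [embed, dif_pos (by omega)]
  congr 1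
  apply Fin.ext
  show j.1 = i.1 - a
  omega

private lemma embed_flip (a c : ℕ) (η : Config N) (ξ : Config (c - a))
    (j : Fin (c - a)) (i : Fin N) (hi : i.1 = a + j.1) :
    embed a c η (flipAt ξ j) = flipAt (embed a c η ξ) i := by
  have hj2 := j.2
  funext x
  simp only [flipAt]
  by_cases hx : x = i
  · subst hx
    rw [Function.update_self, embed, dif_pos (by omega)]
    have he : (⟨x.1 - a, by omega⟩ : Fin (c - a)) = j :=
      Fin.ext (by show x.1 - a = j.1; omega)
    rw [he, Function.update_self, embed_agree a c η ξ j x hi]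
  · rw [Function.update_of_ne hx]
    by_cases hxi : a ≤ x.1 ∧ x.1 < c
    · rw [embed, dif_pos hxi, embed, dif_pos hxi]
      have hne : (⟨x.1 - a, by omega⟩ : Fin (c - a)) ≠ j := by
        intro he
        apply hx
        have h3 : x.1 - a = j.1 := congrArg Fin.val he
        exact Fin.ext (by show x.1 = i.1; omega)
      rw [Function.update_of_ne hne]
    · rw [embed, dif_neg hxi, embed, dif_neg hxi]

/-- Spectral-gap transport: conditional variance on the interval `[a,c)` bounded by
conditional Dirichlet terms, provided the right boundary is effectively empty. -/
private lemma gap_condVar (hρ0 : 0 < ρ) (hρ1 : ρ < 1) (m : KCM) {S : ℝ}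
    (hgap : ∀ (M : ℕ) (g : Config M → ℝ),
      S * (expect ρ (fun σ => g σ ^ 2) - (expect ρ g) ^ 2) ≤ dirichlet (gapModel m) ρ g)
    (f : Config N → ℝ) {a c : ℕ} (hc : c ≤ N) (η : Config N)
    (hbc : c = N ∨ ∃ h : c < N, η ⟨c, h⟩ = false) :
    S * condVar ρ (ivl N a c) (fun σ => Real.sqrt (f σ)) η
      ≤ ∑ j : Fin (c - a), condExp ρ (ivl N a c) (dTerm m ρ f (a + j.1)) η := by
  set g' : Config (c - a) → ℝ := fun ξ => Real.sqrt (f (embed a c η ξ)) with hg'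
  have h1 : condVar ρ (ivl N a c) (fun σ => Real.sqrt (f σ)) η
      = expect ρ (fun ξ => g' ξ ^ 2) - (expect ρ g') ^ 2 := by
    rw [condVar_def, condExp_eq_expect_embed a c hc, condExp_eq_expect_embed a c hc]
  have h2 := hgap (c - a) g'
  rw [h1]
  refine le_trans h2 ?_
  rw [dirichlet_def]
  refine Finset.sum_le_sum fun j _ => ?_
  have hj2 := j.2
  rw [condExp_eq_expect_embed a c hc]
  refine expect_mono hρ0 hρ1 fun ξ => ?_
  show crate (gapModel m) ρ ξ j * (g' (flipAt ξ j) - g' ξ) ^ 2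
    ≤ dTerm m ρ f (a + j.1) (embed a c η ξ)
  rw [dTerm, dif_pos (show a + j.1 < N by omega)]
  have hflip : g' (flipAt ξ j)
      = Real.sqrt (f (flipAt (embed a c η ξ) ⟨a + j.1, by omega⟩)) := by
    show Real.sqrt (f (embed a c η (flipAt ξ j))) = _
    rw [embed_flip a c η ξ j ⟨a + j.1, by omega⟩ rfl]
  rw [hflip]
  refine mul_le_mul_of_nonneg_right ?_ (sq_nonneg _)
  refine crate_sub_le hρ0 hρ1 m (by omega : a + (c - a) = c) hc _ ξ ?_ ?_ j
    ⟨a + j.1, by omega⟩ rfl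
  · intro j' i' hi'
    exact embed_agree a c η ξ j' i' hi'
  · rcases hbc with h | ⟨h, hf⟩
    · exact Or.inl h
    · exact Or.inr ⟨h, by
        rw [embed, dif_neg (show ¬(a ≤ c ∧ c < c) by omega)]; exact hf⟩

end Gap

section Loc

variable {ρ : ℝ} {N : ℕ}

private lemma occAt_congr {b K : ℕ} (η η' : Config N) (bl br : ℝ)
    (hagree : ∀ x : Fin N, b * K ≤ x.1 → x.1 < (b + 1) * K → η x = η' x)
    {k : ℕ} (h1 : b * K + 1 ≤ k) (h2 : k ≤ (b + 1) * K) :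
    occAt η bl br k = occAt η' bl br k := by
  by_cases hN : k ≤ N
  · rw [occAt_eq_occ η bl br ⟨k - 1, by omega⟩ (by omega) hN (by show k - 1 + 1 = k; omega),
      occAt_eq_occ η' bl br ⟨k - 1, by omega⟩ (by omega) hN (by show k - 1 + 1 = k; omega),
      hagree ⟨k - 1, by omega⟩ (by show b * K ≤ k - 1; omega)
        (by show k - 1 < (b + 1) * K; omega)]
  · rw [occAt_high η bl br (by omega), occAt_high η' bl br (by omega)]

private lemma indE_congr (m : KCM) (ε : ℝ) {K b : ℕ} (η η' : Config N)
    (hagree : ∀ x : Fin N, b * K ≤ x.1 → x.1 < (b + 1) * K → η x = η' x) :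
    indE m ρ ε K η b = indE m ρ ε K η' b := by
  have hbk : (b + 1) * K = b * K + K := by ring
  have hfull : blockFull K b η ↔ blockFull K b η' := by
    constructor <;> intro h x hx1 hx2
    · rw [← hagree x hx1 hx2]; exact h x hx1 hx2
    · rw [hagree x hx1 hx2]; exact h x hx1 hx2
  have hact : blockAct m ρ K b η = blockAct m ρ K b η' := by
    rw [blockAct, blockAct]
    refine Finset.sum_congr rfl fun j hj => ?_
    have hjb : (match m with
        | KCM.east => j < K - 1
        | KCM.fa2 => 0 < j ∧ j < K - 1
        | KCM.fa1 => 0 < j ∧ j < K - 1) := by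
      rcases m with _ | _ | _
      · exact Finset.mem_range.mp hj
      · exact Finset.mem_Ioo.mp hj
      · exact Finset.mem_Ioo.mp hj
    rw [crateNat, crateNat]
    split_ifs with h
    · rw [crate, crate]
      have hflip : η ⟨b * K + j, h⟩ = η' ⟨b * K + j, h⟩ := by
        refine hagree _ (by show b * K ≤ b * K + j; omega) ?_
        show b * K + j < (b + 1) * K
        rcases m with _ | _ | _ <;> (simp only [] at hjb; omega)
      rw [hflip]
      congr 1
      rcases m with _ | _ | _
      · show (1:ℝ) - occAt η 0 0 (b * K + j + 2) = 1 - occAt η' 0 0 (b * K + j + 2)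
        simp only [] at hjb
        rw [occAt_congr η η' 0 0 hagree (by omega) (by omega)]
      · show (1:ℝ) - occAt η 0 0 (b * K + j) * occAt η 0 0 (b * K + j + 2)
          = 1 - occAt η' 0 0 (b * K + j) * occAt η' 0 0 (b * K + j + 2)
        simp only [] at hjb
        rw [occAt_congr η η' 0 0 hagree (by omega) (by omega),
          occAt_congr η η' 0 0 hagree (by omega) (by omega)]
      · show (1:ℝ) - occAt η 1 0 (b * K + j) * occAt η 1 0 (b * K + j + 2)
          = 1 - occAt η' 1 0 (b * K + j) * occAt η' 1 0 (b * K + j + 2)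
        simp only [] at hjb
        rw [occAt_congr η η' 1 0 hagree (by omega) (by omega),
          occAt_congr η η' 1 0 hagree (by omega) (by omega)]
    · rfl
  have hdens : blockDens K b η = blockDens K b η' := by
    rw [blockDens, blockDens]
    congr 1
    refine Finset.sum_congr rfl fun j hj => ?_
    have hjK : j < K := Finset.mem_range.mp hj
    exact occAt_congr η η' 0 0 hagree (by omega) (by omega)
  rw [indE, indE, label, label, hact, hdens]
  by_cases hb : blockFull K b η
  · rw [if_pos hb, if_pos (hfull.mp hb)]
  · rw [if_neg hb, if_neg (fun h => hb (hfull.mpr h))]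

/-- Indicator of the event: `z` is an empty site and every site in `(z, e)` is
occupied. -/
private noncomputable def tailInd (e z : ℕ) (η : Config N) : ℝ :=
  if h : z < N then
    (if η ⟨z, h⟩ = false ∧ (∀ x : Fin N, z < x.1 → x.1 < e → η x = true) then 1 else 0)
  else 0

private lemma tailInd_01 (e z : ℕ) (η : Config N) :
    tailInd e z η = 0 ∨ tailInd e z η = 1 := by
  rw [tailInd]; split_ifs <;> simp

/-- Partition of the event `𝓩_{b+2}` according to the rightmost empty site of
the block `B_{b+2}`. -/
private lemma indZ_eq_sum_tailInd {K b : ℕ} (hK : 0 < K) (hub : (b + 1 + 1) * K ≤ N)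
    (η : Config N) :
    indZ K η (b + 1)
      = ∑ z ∈ Finset.Ico ((b + 1) * K) ((b + 1 + 1) * K),
          tailInd ((b + 1 + 1) * K) z η := by
  classical
  rw [indZ]
  split_ifs with hz
  · -- there is an empty site: the rightmost one gives the unique nonzero term
    have hne : ((Finset.Ico ((b + 1) * K) ((b + 1 + 1) * K)).filter
        (fun z => ∃ h : z < N, η ⟨z, h⟩ = false)).Nonempty := by
      obtain ⟨x, hx1, hx2, hx3⟩ := hz
      refine ⟨x.1, ?_⟩
      rw [Finset.mem_filter, Finset.mem_Ico]
      exact ⟨⟨hx1, hx2⟩, x.2, by rw [Fin.eta]; exact hx3⟩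
    set z0 := Finset.max' _ hne with hz0def
    have hz0mem : z0 ∈ (Finset.Ico ((b + 1) * K) ((b + 1 + 1) * K)).filter
        (fun z => ∃ h : z < N, η ⟨z, h⟩ = false) := Finset.max'_mem _ hne
    have hz0max : ∀ z ∈ (Finset.Ico ((b + 1) * K) ((b + 1 + 1) * K)).filter
        (fun z => ∃ h : z < N, η ⟨z, h⟩ = false), z ≤ z0 :=
      fun z hz' => Finset.le_max' _ z hz'
    rw [Finset.mem_filter, Finset.mem_Ico] at hz0mem
    obtain ⟨⟨hz0a, hz0b⟩, hz0N, hz0f⟩ := hz0mem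
    have hval : tailInd ((b + 1 + 1) * K) z0 η = 1 := by
      rw [tailInd, dif_pos hz0N, if_pos]
      refine ⟨hz0f, fun x hx1 hx2 => ?_⟩
      by_contra hxf
      have hxfalse : η x = false := by revert hxf; cases η x <;> simp
      have hxZ : x.1 ∈ (Finset.Ico ((b + 1) * K) ((b + 1 + 1) * K)).filter
          (fun z => ∃ h : z < N, η ⟨z, h⟩ = false) := by
        rw [Finset.mem_filter, Finset.mem_Ico]
        exact ⟨⟨by omega, hx2⟩, x.2, by rw [Fin.eta]; exact hxfalse⟩
      have := hz0max x.1 hxZ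
      omega
    have hsum : (∑ z ∈ Finset.Ico ((b + 1) * K) ((b + 1 + 1) * K),
        tailInd ((b + 1 + 1) * K) z η) = tailInd ((b + 1 + 1) * K) z0 η := by
      refine Finset.sum_eq_single z0 ?_ ?_
      · intro z hzmem hzne
        rw [Finset.mem_Ico] at hzmem
        rw [tailInd]
        split_ifs with h1 h2
        · exfalso
          obtain ⟨hzf, hall⟩ := h2
          have hzZ : z ∈ (Finset.Ico ((b + 1) * K) ((b + 1 + 1) * K)).filter
              (fun z => ∃ h : z < N, η ⟨z, h⟩ = false) := by
            rw [Finset.mem_filter, Finset.mem_Ico]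
            exact ⟨hzmem, h1, hzf⟩
          have hle := hz0max z hzZ
          have hlt : z < z0 := lt_of_le_of_ne hle hzne
          have hthis := hall ⟨z0, hz0N⟩ hlt hz0b
          rw [hthis] at hz0f
          simp at hz0f
        · rfl
        · rfl
      · intro hz0nmem
        exact absurd (Finset.mem_Ico.mpr ⟨hz0a, hz0b⟩) hz0nmem
    rw [hsum, hval]
  · -- no empty site in the block: every term vanishes
    symm
    refine Finset.sum_eq_zero fun z hzmem => ?_
    rw [Finset.mem_Ico] at hzmem
    rw [tailInd]
    split_ifs with h1 h2
    · exfalso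
      obtain ⟨hzf, _⟩ := h2
      exact hz ⟨⟨z, h1⟩, hzmem.1, hzmem.2, hzf⟩
    · rfl
    · rfl

end Loc

section Core

variable {ρ : ℝ} {N : ℕ}

private lemma condExp_nonneg (hρ0 : 0 < ρ) (hρ1 : ρ < 1) (B : Finset (Fin N))
    {g : Config N → ℝ} (hg : ∀ σ, 0 ≤ g σ) (η : Config N) : 0 ≤ condExp ρ B g η := by
  rw [condExp_def]
  exact Finset.sum_nonneg fun ζ _ => mul_nonneg
    (Finset.prod_nonneg fun i _ => wt_nonneg hρ0 hρ1 _) (hg _)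

private lemma condExp_congr (B : Finset (Fin N)) {g h : Config N → ℝ}
    (e : ∀ σ, g σ = h σ) (η : Config N) : condExp ρ B g η = condExp ρ B h η := by
  rw [condExp_def, condExp_def]
  exact Finset.sum_congr rfl fun ζ _ => by rw [e]

private lemma sq_sum_le {ι : Type*} [Fintype ι] (w g : ι → ℝ) (hw : ∀ i, 0 ≤ w i)
    (hw1 : ∑ i, w i = 1) : (∑ i, w i * g i) ^ 2 ≤ ∑ i, w i * g i ^ 2 := by
  have hcs := sum_mul_sq_le_sq_mul_sq Finset.univ
      (fun i => Real.sqrt (w i)) (fun i => Real.sqrt (w i) * g i)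
  have e1 : ∀ i, Real.sqrt (w i) * (Real.sqrt (w i) * g i) = w i * g i := by
    intro i; rw [← mul_assoc, Real.mul_self_sqrt (hw i)]
  have e2 : ∀ i, (Real.sqrt (w i)) ^ 2 = w i := fun i => Real.sq_sqrt (hw i)
  have e3 : ∀ i, (Real.sqrt (w i) * g i) ^ 2 = w i * g i ^ 2 := by
    intro i; rw [mul_pow, e2 i]
  rw [Finset.sum_congr rfl (fun i _ => e1 i), Finset.sum_congr rfl (fun i _ => e2 i),
    Finset.sum_congr rfl (fun i _ => e3 i), hw1, one_mul] at hcs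
  exact hcs

private lemma condVar_nonneg (hρ0 : 0 < ρ) (hρ1 : ρ < 1) (B : Finset (Fin N))
    (g : Config N → ℝ) (η : Config N) : 0 ≤ condVar ρ B g η := by
  rw [condVar_def, condExp_def, condExp_def]
  have := sq_sum_le (ι := {x // x ∈ B} → Bool)
    (fun ζ => ∏ i : {x // x ∈ B}, (if ζ i then ρ else 1 - ρ))
    (fun ζ => g (fun j => if h : j ∈ B then ζ ⟨j, h⟩ else η j))
    (fun ζ => Finset.prod_nonneg fun i _ => wt_nonneg hρ0 hρ1 _) sum_prod_wt
  linarith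

private lemma amgm {S γ lam A V : ℝ} (hS : 0 < S) (hγ : 0 < γ) (hA : 0 ≤ A) (hV : 0 ≤ V) :
    γ * (2 * Real.sqrt A * Real.sqrt V)
      ≤ 2 * γ ^ 2 / (S * Real.exp lam) * A + S * Real.exp lam / 2 * V := by
  set e := S * Real.exp lam with he
  have he0 : 0 < e := mul_pos hS (Real.exp_pos lam)
  set x := Real.sqrt A with hxd
  set y := Real.sqrt V with hyd
  have hx : x ^ 2 = A := Real.sq_sqrt hA
  have hy : y ^ 2 = V := Real.sq_sqrt hV
  have key : 2 * γ * (x * y) * e ≤ 2 * γ ^ 2 * x ^ 2 + e ^ 2 / 2 * y ^ 2 := by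
    nlinarith [sq_nonneg (2 * γ * x - e * y)]
  rw [← hx, ← hy]
  have h2 : 2 * γ ^ 2 / e * x ^ 2 + e / 2 * y ^ 2
      = (2 * γ ^ 2 * x ^ 2 + e ^ 2 / 2 * y ^ 2) / e := by
    field_simp
  rw [h2, le_div_iff₀ he0]
  nlinarith [key]

set_option maxHeartbeats 2000000 in
/-- Core inequality for one block/boundary pair. -/
private lemma pair_core (hρ0 : 0 < ρ) (hρ1 : ρ < 1) (m : KCM) {S γ lam mv : ℝ}
    (hS0 : 0 < S) (hγ : 0 < γ)
    (hgap : ∀ (M : ℕ) (g : Config M → ℝ),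
      S * (expect ρ (fun σ => g σ ^ 2) - (expect ρ g) ^ 2) ≤ dirichlet (gapModel m) ρ g)
    (f : Config N → ℝ) (hf : ∀ η, 0 ≤ f η)
    (χ Θ : Config N → ℝ) {a c : ℕ} (hc : c ≤ N)
    (hχ01 : ∀ η, χ η = 0 ∨ χ η = 1)
    (hχm : expect ρ χ ≤ mv)
    (hχdep : ∀ (η η' : Config N), (∀ j : Fin N, j ∈ ivl N a c → η j = η' j) → χ η = χ η')
    (hΘ01 : ∀ η, Θ η = 0 ∨ Θ η = 1)
    (hΘdep : ∀ (η : Config N) (ζ : {x // x ∈ ivl N a c} → Bool),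
        Θ (fun j => if h : j ∈ ivl N a c then ζ ⟨j, h⟩ else η j) = Θ η)
    (hΘbc : ∀ η, Θ η ≠ 0 → (c = N ∨ ∃ h : c < N, η ⟨c, h⟩ = false)) :
    γ * expect ρ (fun η => f η * (χ η * Θ η))
      ≤ (γ * mv + 2 * γ ^ 2 / (S * Real.exp lam)) * expect ρ (fun η => Θ η * f η)
        + Real.exp lam / 2
          * ∑ j : Fin (c - a), expect ρ (fun η => Θ η * dTerm m ρ f (a + j.1) η) := by
  classical
  set P := ivl N a c with hP
  set q := expect ρ χ with hqd
  have hq : ∀ η, condExp ρ P χ η = q := fun η => condExp_eq_expect P χ hχdep η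
  -- pointwise claim
  have claim : ∀ η, γ * (Θ η * condExp ρ P (fun σ => f σ * χ σ) η)
      ≤ (γ * mv + 2 * γ ^ 2 / (S * Real.exp lam)) * (Θ η * condExp ρ P f η)
        + Real.exp lam / 2
          * (Θ η * ∑ j : Fin (c - a), condExp ρ P (dTerm m ρ f (a + j.1)) η) := by
    intro η
    rcases hΘ01 η with h0 | h1
    · rw [h0]
      simp
    · rw [h1]
      simp only [one_mul]
      set A := condExp ρ P f η with hAd
      set V := condVar ρ P (fun σ => Real.sqrt (f σ)) η with hVd
      have hA0 : 0 ≤ A := condExp_nonneg hρ0 hρ1 P hf η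
      have hV0 : 0 ≤ V := condVar_nonneg hρ0 hρ1 P _ η
      -- covariance bound
      have hcov : condExp ρ P (fun σ => f σ * χ σ) η
          ≤ A * q + 2 * Real.sqrt A * Real.sqrt V := by
        have hcb := cov_bound (ι := {x // x ∈ P} → Bool)
          (fun ζ => ∏ i : {x // x ∈ P}, (if ζ i then ρ else 1 - ρ))
          (fun ζ => f (fun j => if h : j ∈ P then ζ ⟨j, h⟩ else η j))
          (fun ζ => χ (fun j => if h : j ∈ P then ζ ⟨j, h⟩ else η j))
          (fun ζ => Finset.prod_nonneg fun i _ => wt_nonneg hρ0 hρ1 _)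
          sum_prod_wt
          (fun ζ => hf _)
          (fun ζ => by
            show 0 ≤ χ (fun j => if h : j ∈ P then ζ ⟨j, h⟩ else η j)
            rcases hχ01 (fun j => if h : j ∈ P then ζ ⟨j, h⟩ else η j) with h | h <;>
              rw [h] <;> norm_num)
          (fun ζ => by
            show χ (fun j => if h : j ∈ P then ζ ⟨j, h⟩ else η j) ≤ 1
            rcases hχ01 (fun j => if h : j ∈ P then ζ ⟨j, h⟩ else η j) with h | h <;>
              rw [h] <;> norm_num)
        have e1 : condExp ρ P (fun σ => f σ * χ σ) η
            = ∑ ζ : {x // x ∈ P} → Bool,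
              (∏ i : {x // x ∈ P}, (if ζ i then ρ else 1 - ρ)) *
                ((f (fun j => if h : j ∈ P then ζ ⟨j, h⟩ else η j))
                  * (χ (fun j => if h : j ∈ P then ζ ⟨j, h⟩ else η j))) := by
          rw [condExp_def]
        have e2 : A = ∑ ζ : {x // x ∈ P} → Bool,
            (∏ i : {x // x ∈ P}, (if ζ i then ρ else 1 - ρ)) *
              (f (fun j => if h : j ∈ P then ζ ⟨j, h⟩ else η j)) := by
          rw [hAd, condExp_def]
        have e3 : q = ∑ ζ : {x // x ∈ P} → Bool,
            (∏ i : {x // x ∈ P}, (if ζ i then ρ else 1 - ρ)) *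
              (χ (fun j => if h : j ∈ P then ζ ⟨j, h⟩ else η j)) := by
          rw [← hq η, condExp_def]
        have e4 : V = (∑ ζ : {x // x ∈ P} → Bool,
            (∏ i : {x // x ∈ P}, (if ζ i then ρ else 1 - ρ)) *
              (f (fun j => if h : j ∈ P then ζ ⟨j, h⟩ else η j)))
            - (∑ ζ : {x // x ∈ P} → Bool,
              (∏ i : {x // x ∈ P}, (if ζ i then ρ else 1 - ρ)) *
                Real.sqrt (f (fun j => if h : j ∈ P then ζ ⟨j, h⟩ else η j))) ^ 2 := by
          rw [hVd, condVar_def]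
          have e5 : condExp ρ P (fun σ => Real.sqrt (f σ) ^ 2) η = A :=
            condExp_congr P (fun σ => Real.sq_sqrt (hf σ)) η
          rw [e5, e2, condExp_def]
        rw [e1, e2, e3, e4]
        exact hcb
      -- spectral gap bound
      have hgapP : S * V ≤ ∑ j : Fin (c - a), condExp ρ P (dTerm m ρ f (a + j.1)) η := by
        rw [hVd, hP]
        exact gap_condVar hρ0 hρ1 m hgap f hc η (hΘbc η (by rw [h1]; norm_num))
      have hamgm := amgm (lam := lam) hS0 hγ hA0 hV0
      have hqmv : γ * (A * q) ≤ γ * mv * A := by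
        have := mul_le_mul_of_nonneg_left hχm (mul_nonneg hγ.le hA0)
        calc γ * (A * q) = γ * A * q := by ring
          _ ≤ γ * A * mv := mul_le_mul_of_nonneg_left hχm (mul_nonneg hγ.le hA0)
          _ = γ * mv * A := by ring
      have hSV : S * Real.exp lam / 2 * V
          ≤ Real.exp lam / 2 * ∑ j : Fin (c - a), condExp ρ P (dTerm m ρ f (a + j.1)) η := by
        have h3 : Real.exp lam / 2 * (S * V)
            ≤ Real.exp lam / 2 * ∑ j : Fin (c - a), condExp ρ P (dTerm m ρ f (a + j.1)) η :=
          mul_le_mul_of_nonneg_left hgapP (by positivity)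
        calc S * Real.exp lam / 2 * V = Real.exp lam / 2 * (S * V) := by ring
          _ ≤ _ := h3
      calc γ * condExp ρ P (fun σ => f σ * χ σ) η
          ≤ γ * (A * q + 2 * Real.sqrt A * Real.sqrt V) :=
            mul_le_mul_of_nonneg_left hcov hγ.le
        _ = γ * (A * q) + γ * (2 * Real.sqrt A * Real.sqrt V) := by ring
        _ ≤ γ * mv * A + (2 * γ ^ 2 / (S * Real.exp lam) * A + S * Real.exp lam / 2 * V) := by
            linarith [hamgm]
        _ ≤ γ * mv * A + 2 * γ ^ 2 / (S * Real.exp lam) * A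
            + Real.exp lam / 2 * ∑ j : Fin (c - a), condExp ρ P (dTerm m ρ f (a + j.1)) η := by
            linarith [hSV]
        _ = (γ * mv + 2 * γ ^ 2 / (S * Real.exp lam)) * A
            + Real.exp lam / 2 * ∑ j : Fin (c - a), condExp ρ P (dTerm m ρ f (a + j.1)) η := by
            ring
  -- integrate the pointwise claim
  have hL2 : expect ρ (fun η => f η * (χ η * Θ η))
      = expect ρ (fun η => Θ η * condExp ρ P (fun σ => f σ * χ σ) η) := by
    rw [expect_mul_condExp P Θ (fun σ => f σ * χ σ) hΘdep]
    exact expect_congr fun η => by ring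
  have hsmul : ∀ (r : ℝ) (g : Config N → ℝ),
      expect ρ (fun η => r * g η) = r * expect ρ g := by
    intro r g
    rw [expect_def, expect_def, Finset.mul_sum]
    exact Finset.sum_congr rfl fun η _ => by ring
  calc γ * expect ρ (fun η => f η * (χ η * Θ η))
      = expect ρ (fun η => γ * (Θ η * condExp ρ P (fun σ => f σ * χ σ) η)) := by
        rw [hsmul, hL2]
    _ ≤ expect ρ (fun η =>
          (γ * mv + 2 * γ ^ 2 / (S * Real.exp lam)) * (Θ η * condExp ρ P f η)
          + Real.exp lam / 2
            * (Θ η * ∑ j : Fin (c - a), condExp ρ P (dTerm m ρ f (a + j.1)) η)) :=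
        expect_mono hρ0 hρ1 claim
    _ = (γ * mv + 2 * γ ^ 2 / (S * Real.exp lam))
          * expect ρ (fun η => Θ η * condExp ρ P f η)
        + Real.exp lam / 2
          * expect ρ (fun η =>
              Θ η * ∑ j : Fin (c - a), condExp ρ P (dTerm m ρ f (a + j.1)) η) := by
        rw [expect_add, hsmul, hsmul]
    _ = (γ * mv + 2 * γ ^ 2 / (S * Real.exp lam)) * expect ρ (fun η => Θ η * f η)
        + Real.exp lam / 2
          * ∑ j : Fin (c - a), expect ρ (fun η => Θ η * dTerm m ρ f (a + j.1) η) := by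
        have hstep1 : expect ρ (fun η => Θ η * condExp ρ P f η)
            = expect ρ (fun η => Θ η * f η) := expect_mul_condExp P Θ f hΘdep
        have hstep2 : ∀ j : Fin (c - a),
            expect ρ (fun η => Θ η * condExp ρ P (dTerm m ρ f (a + j.1)) η)
              = expect ρ (fun η => Θ η * dTerm m ρ f (a + j.1) η) :=
          fun j => expect_mul_condExp P Θ _ hΘdep
        have hstep3 : expect ρ (fun η =>
              Θ η * ∑ j : Fin (c - a), condExp ρ P (dTerm m ρ f (a + j.1)) η)
            = ∑ j : Fin (c - a),
                expect ρ (fun η => Θ η * condExp ρ P (dTerm m ρ f (a + j.1)) η) := by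
          rw [expect_def]
          have hh : ∀ η : Config N, bern ρ η *
                (Θ η * ∑ j : Fin (c - a), condExp ρ P (dTerm m ρ f (a + j.1)) η)
              = ∑ j : Fin (c - a),
                  bern ρ η * (Θ η * condExp ρ P (dTerm m ρ f (a + j.1)) η) := by
            intro η; rw [Finset.mul_sum, Finset.mul_sum]
          rw [Finset.sum_congr rfl fun η _ => hh η]
          rw [Finset.sum_comm]
          rfl
        rw [hstep1, hstep3, Finset.sum_congr rfl fun j _ => hstep2 j]

end Core

section MainAux

variable {ρ : ℝ} {N : ℕ}

private lemma expect_sum' {α : Type*} (s : Finset α) (g : α → Config N → ℝ)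
    (G : Config N → ℝ) (hG : ∀ η, G η = ∑ z ∈ s, g z η) :
    expect ρ G = ∑ z ∈ s, expect ρ (g z) := by
  rw [expect_def]
  rw [Finset.sum_congr rfl fun η (_ : η ∈ Finset.univ) => by rw [hG η, Finset.mul_sum]]
  rw [Finset.sum_comm]
  rfl

private lemma indE_01 (m : KCM) (ε : ℝ) (K b : ℕ) (η : Config N) :
    indE m ρ ε K η b = 0 ∨ indE m ρ ε K η b = 1 := by
  rw [indE]; split_ifs <;> simp

private lemma indE_nonneg (m : KCM) (ε : ℝ) (K b : ℕ) (η : Config N) :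
    0 ≤ indE m ρ ε K η b := by
  rcases indE_01 (ρ := ρ) m ε K b η with h | h <;> rw [h] <;> norm_num

private lemma tailInd_patch (e z : ℕ) {a : ℕ} (ha : a ≤ z) (η : Config N)
    (ζ : {x // x ∈ ivl N a z} → Bool) :
    tailInd e z (fun j => if h : j ∈ ivl N a z then ζ ⟨j, h⟩ else η j) = tailInd e z η := by
  by_cases hzN : z < N
  · rw [tailInd, tailInd, dif_pos hzN, dif_pos hzN]
    have h1 : (fun j => if h : j ∈ ivl N a z then ζ ⟨j, h⟩ else η j) (⟨z, hzN⟩ : Fin N)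
        = η ⟨z, hzN⟩ :=
      dif_neg (fun hm => absurd ((mem_ivl.mp hm).2 : z < z) (lt_irrefl z))
    have h2 : ∀ x : Fin N, z < x.1 →
        (fun j => if h : j ∈ ivl N a z then ζ ⟨j, h⟩ else η j) x = η x :=
      fun x hx => dif_neg (fun hm => by have := (mem_ivl.mp hm).2; omega)
    have hiff : ((fun j => if h : j ∈ ivl N a z then ζ ⟨j, h⟩ else η j) ⟨z, hzN⟩ = false
          ∧ ∀ x : Fin N, z < x.1 → x.1 < e →
            (fun j => if h : j ∈ ivl N a z then ζ ⟨j, h⟩ else η j) x = true)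
        ↔ (η ⟨z, hzN⟩ = false ∧ ∀ x : Fin N, z < x.1 → x.1 < e → η x = true) := by
      constructor
      · rintro ⟨hA, hB⟩
        exact ⟨by rw [← h1]; exact hA,
          fun x hx1 hx2 => by rw [← h2 x hx1]; exact hB x hx1 hx2⟩
      · rintro ⟨hA, hB⟩
        exact ⟨by rw [h1]; exact hA,
          fun x hx1 hx2 => by rw [h2 x hx1]; exact hB x hx1 hx2⟩
    rw [if_congr hiff rfl rfl]
  · rw [tailInd, tailInd, dif_neg hzN, dif_neg hzN]

private lemma tailInd_ne_zero {e z : ℕ} {η : Config N} (h : tailInd e z η ≠ 0) :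
    ∃ hz : z < N, η ⟨z, hz⟩ = false := by
  rw [tailInd] at h
  split_ifs at h with h1 h2
  · exact ⟨h1, h2.1⟩
  · simp at h
  · simp at h

private lemma indZ_le_one (K b : ℕ) (η : Config N) : indZ K η b ≤ 1 := by
  rw [indZ]; split_ifs <;> norm_num

private lemma indZ_nonneg (K b : ℕ) (η : Config N) : 0 ≤ indZ K η b := by
  rw [indZ]; split_ifs <;> norm_num

end MainAux

/-- **Core estimate of Lemma 4.5** (Gaussian bound for the density of
non-equilibrated blocks). For the East or FA-1f model in dimension 1 at density
`ρ ∈ (0,1)`, with `K` dividing `N` and `ε` as in the definition of the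
activity-density labels, assuming a uniform spectral gap lower bound `S > 0` on
finite intervals with empty right boundary condition, and with `m` an upper bound
for (hence in particular the maximum of) `ν(1_{𝓔_i})` over the blocks: for every
`λ ∈ ℝ`, `γ > 0` and every probability density `f`,
`γ·ν(f·V) − e^λ·𝒟_N(√f) ≤ (N/K)·(γ·m + 2γ²/(S·e^λ))`. -/
theorem gaussian_bound_bad_blocks (ρ : ℝ) (hρ0 : 0 < ρ) (hρ1 : ρ < 1) (m : KCM)
    (K N : ℕ) (hK : 0 < K) (hN : K ≤ N) (hKN : K ∣ N)
    (ε : ℝ) (hε : 0 < ε) (hε1 : ρ + ε < 1)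
    (hε2 : ε * K < meanAct m ρ * ((interiorIdx m K).card : ℝ))
    (S : ℝ) (hS0 : 0 < S)
    (hgap : ∀ (M : ℕ) (g : Config M → ℝ),
      S * (expect ρ (fun σ => g σ ^ 2) - (expect ρ g) ^ 2)
        ≤ dirichlet (gapModel m) ρ g)
    (mv : ℝ)
    (hmv : ∀ b ∈ Finset.range (N / K), expect ρ (fun η : Config N => indE m ρ ε K η b) ≤ mv)
    (lam γ : ℝ) (hγ : 0 < γ)
    (f : Config N → ℝ) (hf : ∀ η, 0 ≤ f η) (hf1 : expect ρ f = 1) :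
    γ * expect ρ (fun η => f η * Vfun m ρ ε K η)
        - Real.exp lam * dirichlet m ρ (fun η => Real.sqrt (f η))
      ≤ ((N : ℝ) / K) * (γ * mv + 2 * γ ^ 2 / (S * Real.exp lam)) := by
  classical
  have hR1 : 1 ≤ N / K := (Nat.one_le_div_iff hK).mpr hN
  have hNRK : (N / K) * K = N := Nat.div_mul_cancel hKN
  have he0 : (0:ℝ) < Real.exp lam := Real.exp_pos lam
  have hC0 : (0:ℝ) ≤ 2 * γ ^ 2 / (S * Real.exp lam) := by positivity
  have hmv0 : (0:ℝ) ≤ mv :=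
    le_trans (expect_nonneg hρ0 hρ1 fun η => indE_nonneg m ε K 0 η)
      (hmv 0 (Finset.mem_range.mpr (by omega)))
  have hgmC : (0:ℝ) ≤ γ * mv + 2 * γ ^ 2 / (S * Real.exp lam) := by
    have := mul_nonneg hγ.le hmv0; linarith
  have ht0 : ∀ i, (0:ℝ) ≤ expect ρ (dTerm m ρ f i) :=
    fun i => expect_nonneg hρ0 hρ1 fun η => dTerm_nonneg hρ0 hρ1 m f i η
  have hA0 : ∀ β : ℕ, (0:ℝ) ≤ ∑ j ∈ Finset.range K, expect ρ (dTerm m ρ f (β * K + j)) :=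
    fun β => Finset.sum_nonneg fun j _ => ht0 _
  -- the block sums add up to the Dirichlet form
  have hblocks : ∀ r : ℕ,
      (∑ b ∈ Finset.range r, ∑ j ∈ Finset.range K, expect ρ (dTerm m ρ f (b * K + j)))
        = ∑ i ∈ Finset.range (r * K), expect ρ (dTerm m ρ f i) := by
    intro r
    induction r with
    | zero => simp
    | succ r ih =>
      rw [Finset.sum_range_succ, ih, show (r + 1) * K = r * K + K by ring,
        Finset.sum_range_add]
  have hdiri : (∑ b ∈ Finset.range (N / K), ∑ j ∈ Finset.range K,
        expect ρ (dTerm m ρ f (b * K + j)))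
      = dirichlet m ρ (fun η => Real.sqrt (f η)) := by
    rw [hblocks, hNRK, dirichlet_def,
      ← Fin.sum_univ_eq_sum_range (fun i => expect ρ (dTerm m ρ f i)) N]
    refine Finset.sum_congr rfl fun i _ => ?_
    refine expect_congr fun η => ?_
    rw [dTerm, dif_pos i.2]
  -- double counting of blocks
  have hcount : ((∑ b ∈ Finset.range (N / K - 1),
        ((∑ j ∈ Finset.range K, expect ρ (dTerm m ρ f (b * K + j)))
          + ∑ j ∈ Finset.range K, expect ρ (dTerm m ρ f ((b + 1) * K + j))))
      + ∑ j ∈ Finset.range K, expect ρ (dTerm m ρ f ((N / K - 1) * K + j)))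
      ≤ 2 * ∑ b ∈ Finset.range (N / K), ∑ j ∈ Finset.range K,
          expect ρ (dTerm m ρ f (b * K + j)) := by
    have h1 : (∑ b ∈ Finset.range (N / K), ∑ j ∈ Finset.range K,
          expect ρ (dTerm m ρ f (b * K + j)))
        = (∑ b ∈ Finset.range (N / K - 1), ∑ j ∈ Finset.range K,
            expect ρ (dTerm m ρ f (b * K + j)))
          + ∑ j ∈ Finset.range K, expect ρ (dTerm m ρ f ((N / K - 1) * K + j)) := by
      conv_lhs => rw [show N / K = (N / K - 1) + 1 by omega]
      rw [Finset.sum_range_succ]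
    have h2 : (∑ b ∈ Finset.range (N / K), ∑ j ∈ Finset.range K,
          expect ρ (dTerm m ρ f (b * K + j)))
        = (∑ b ∈ Finset.range (N / K - 1), ∑ j ∈ Finset.range K,
            expect ρ (dTerm m ρ f ((b + 1) * K + j)))
          + ∑ j ∈ Finset.range K, expect ρ (dTerm m ρ f (0 * K + j)) := by
      conv_lhs => rw [show N / K = (N / K - 1) + 1 by omega]
      rw [Finset.sum_range_succ']
    rw [Finset.sum_add_distrib]
    have h3 := hA0 0
    linarith
  -- per-block estimate (interior blocks)
  have hblock : ∀ b ∈ Finset.range (N / K - 1),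
      γ * expect ρ (fun η => f η * (indE m ρ ε K η b * indZ K η (b + 1)))
        ≤ (γ * mv + 2 * γ ^ 2 / (S * Real.exp lam))
          + Real.exp lam / 2 *
            ((∑ j ∈ Finset.range K, expect ρ (dTerm m ρ f (b * K + j)))
              + ∑ j ∈ Finset.range K, expect ρ (dTerm m ρ f ((b + 1) * K + j))) := by
    intro b hb
    have hbR : b < N / K - 1 := Finset.mem_range.mp hb
    have hub : (b + 1 + 1) * K ≤ N := by
      calc (b + 1 + 1) * K ≤ (N / K) * K := Nat.mul_le_mul_right K (by omega)
        _ = N := hNRK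
    have hbk2 : (b + 1 + 1) * K = b * K + 2 * K := by ring
    have hbk1 : (b + 1) * K = b * K + K := by ring
    -- apply the pair lemma at each possible rightmost-zero position z
    have hz : ∀ z ∈ Finset.Ico ((b + 1) * K) ((b + 1 + 1) * K),
        γ * expect ρ (fun η => f η * (indE m ρ ε K η b * tailInd ((b + 1 + 1) * K) z η))
          ≤ (γ * mv + 2 * γ ^ 2 / (S * Real.exp lam))
              * expect ρ (fun η => tailInd ((b + 1 + 1) * K) z η * f η)
            + Real.exp lam / 2 *
              ∑ j ∈ Finset.range (z - b * K),
                expect ρ (fun η =>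
                  tailInd ((b + 1 + 1) * K) z η * dTerm m ρ f (b * K + j) η) := by
      intro z hzmem
      rw [Finset.mem_Ico] at hzmem
      have hzN : z ≤ N := by omega
      have hpc := pair_core (lam := lam) hρ0 hρ1 m hS0 hγ hgap f hf
        (fun η => indE m ρ ε K η b) (fun η => tailInd ((b + 1 + 1) * K) z η)
        (a := b * K) (c := z) hzN
        (fun η => indE_01 m ε K b η)
        (hmv b (Finset.mem_range.mpr (by omega)))
        (fun η η' hag => indE_congr m ε η η'
          (fun x hx1 hx2 => hag x (mem_ivl.mpr ⟨hx1, by omega⟩)))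
        (fun η => tailInd_01 ((b + 1 + 1) * K) z η)
        (fun η ζ => tailInd_patch ((b + 1 + 1) * K) z (by omega) η ζ)
        (fun η hne => Or.inr (tailInd_ne_zero hne))
      refine le_trans hpc (add_le_add (le_refl _) (le_of_eq ?_))
      congr 1
      rw [← Fin.sum_univ_eq_sum_range (fun j => expect ρ (fun η =>
        tailInd ((b + 1 + 1) * K) z η * dTerm m ρ f (b * K + j) η)) (z - b * K)]
    -- split the expectation over z
    have hsplit : expect ρ (fun η => f η * (indE m ρ ε K η b * indZ K η (b + 1)))
        = ∑ z ∈ Finset.Ico ((b + 1) * K) ((b + 1 + 1) * K),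
            expect ρ (fun η => f η * (indE m ρ ε K η b * tailInd ((b + 1 + 1) * K) z η)) :=
      expect_sum' _ (fun z η => f η * (indE m ρ ε K η b * tailInd ((b + 1 + 1) * K) z η)) _
        (fun η => by
          show f η * (indE m ρ ε K η b * indZ K η (b + 1)) = _
          rw [indZ_eq_sum_tailInd hK hub η, Finset.mul_sum, Finset.mul_sum])
    have hsum1 : (∑ z ∈ Finset.Ico ((b + 1) * K) ((b + 1 + 1) * K),
          expect ρ (fun η => tailInd ((b + 1 + 1) * K) z η * f η)) ≤ 1 := by
      have heq := expect_sum' (ρ := ρ) (Finset.Ico ((b + 1) * K) ((b + 1 + 1) * K))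
        (fun z η => tailInd ((b + 1 + 1) * K) z η * f η)
        (fun η => indZ K η (b + 1) * f η)
        (fun η => by
          show indZ K η (b + 1) * f η = _
          rw [indZ_eq_sum_tailInd hK hub η, Finset.sum_mul])
      rw [← heq]
      calc expect ρ (fun η => indZ K η (b + 1) * f η)
          ≤ expect ρ f := expect_mono hρ0 hρ1 (fun η => by
            have h1 := indZ_le_one K (b + 1) η
            have h2 := indZ_nonneg K (b + 1) η
            nlinarith [hf η])
        _ = 1 := hf1
    have hsum2 : (∑ z ∈ Finset.Ico ((b + 1) * K) ((b + 1 + 1) * K),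
          ∑ j ∈ Finset.range (z - b * K),
            expect ρ (fun η => tailInd ((b + 1 + 1) * K) z η * dTerm m ρ f (b * K + j) η))
        ≤ (∑ j ∈ Finset.range K, expect ρ (dTerm m ρ f (b * K + j)))
          + ∑ j ∈ Finset.range K, expect ρ (dTerm m ρ f ((b + 1) * K + j)) := by
      have hin : ∀ z, (∑ j ∈ Finset.range (z - b * K),
            expect ρ (fun η => tailInd ((b + 1 + 1) * K) z η * dTerm m ρ f (b * K + j) η))
          = expect ρ (fun η => tailInd ((b + 1 + 1) * K) z η *
              ∑ j ∈ Finset.range (z - b * K), dTerm m ρ f (b * K + j) η) :=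
        fun z => (expect_sum' _
          (fun j η => tailInd ((b + 1 + 1) * K) z η * dTerm m ρ f (b * K + j) η)
          _ (fun η => by
            show tailInd ((b + 1 + 1) * K) z η *
              (∑ j ∈ Finset.range (z - b * K), dTerm m ρ f (b * K + j) η) = _
            rw [Finset.mul_sum])).symm
      rw [Finset.sum_congr rfl fun z _ => hin z]
      have houter := expect_sum' (ρ := ρ) (Finset.Ico ((b + 1) * K) ((b + 1 + 1) * K))
        (fun z η => tailInd ((b + 1 + 1) * K) z η *
          ∑ j ∈ Finset.range (z - b * K), dTerm m ρ f (b * K + j) η)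
        (fun η => ∑ z ∈ Finset.Ico ((b + 1) * K) ((b + 1 + 1) * K),
          tailInd ((b + 1 + 1) * K) z η *
            ∑ j ∈ Finset.range (z - b * K), dTerm m ρ f (b * K + j) η)
        (fun η => rfl)
      rw [← houter]
      have hpt : ∀ η, (∑ z ∈ Finset.Ico ((b + 1) * K) ((b + 1 + 1) * K),
            tailInd ((b + 1 + 1) * K) z η *
              ∑ j ∈ Finset.range (z - b * K), dTerm m ρ f (b * K + j) η)
          ≤ ∑ j ∈ Finset.range (2 * K), dTerm m ρ f (b * K + j) η := by
        intro η
        have hT0 : (0:ℝ) ≤ ∑ j ∈ Finset.range (2 * K), dTerm m ρ f (b * K + j) η :=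
          Finset.sum_nonneg fun j _ => dTerm_nonneg hρ0 hρ1 m f _ η
        calc (∑ z ∈ Finset.Ico ((b + 1) * K) ((b + 1 + 1) * K),
              tailInd ((b + 1 + 1) * K) z η *
                ∑ j ∈ Finset.range (z - b * K), dTerm m ρ f (b * K + j) η)
            ≤ ∑ z ∈ Finset.Ico ((b + 1) * K) ((b + 1 + 1) * K),
              tailInd ((b + 1 + 1) * K) z η *
                ∑ j ∈ Finset.range (2 * K), dTerm m ρ f (b * K + j) η := by
              refine Finset.sum_le_sum fun z hzmem => ?_
              rw [Finset.mem_Ico] at hzmem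
              rcases tailInd_01 ((b + 1 + 1) * K) z η with h | h
              · rw [h, zero_mul, zero_mul]
              · rw [h, one_mul, one_mul]
                refine Finset.sum_le_sum_of_subset_of_nonneg ?_
                  (fun j _ _ => dTerm_nonneg hρ0 hρ1 m f _ η)
                intro j hj
                rw [Finset.mem_range] at *
                omega
          _ = (∑ z ∈ Finset.Ico ((b + 1) * K) ((b + 1 + 1) * K),
                tailInd ((b + 1 + 1) * K) z η) *
              ∑ j ∈ Finset.range (2 * K), dTerm m ρ f (b * K + j) η :=
            (Finset.sum_mul _ _ _).symm
          _ = indZ K η (b + 1) * ∑ j ∈ Finset.range (2 * K), dTerm m ρ f (b * K + j) η := by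
            rw [← indZ_eq_sum_tailInd hK hub η]
          _ ≤ 1 * ∑ j ∈ Finset.range (2 * K), dTerm m ρ f (b * K + j) η :=
            mul_le_mul_of_nonneg_right (indZ_le_one K (b + 1) η) hT0
          _ = ∑ j ∈ Finset.range (2 * K), dTerm m ρ f (b * K + j) η := one_mul _
      calc expect ρ (fun η => ∑ z ∈ Finset.Ico ((b + 1) * K) ((b + 1 + 1) * K),
              tailInd ((b + 1 + 1) * K) z η *
                ∑ j ∈ Finset.range (z - b * K), dTerm m ρ f (b * K + j) η)
          ≤ expect ρ (fun η => ∑ j ∈ Finset.range (2 * K), dTerm m ρ f (b * K + j) η) :=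
            expect_mono hρ0 hρ1 hpt
        _ = ∑ j ∈ Finset.range (2 * K), expect ρ (dTerm m ρ f (b * K + j)) :=
            expect_sum' _ (fun j η => dTerm m ρ f (b * K + j) η) _ (fun η => rfl)
        _ = (∑ j ∈ Finset.range K, expect ρ (dTerm m ρ f (b * K + j)))
            + ∑ j ∈ Finset.range K, expect ρ (dTerm m ρ f ((b + 1) * K + j)) := by
            rw [show 2 * K = K + K by ring, Finset.sum_range_add]
            congr 1
            refine Finset.sum_congr rfl fun j _ => ?_
            rw [show b * K + (K + j) = (b + 1) * K + j by ring]
    calc γ * expect ρ (fun η => f η * (indE m ρ ε K η b * indZ K η (b + 1)))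
        = ∑ z ∈ Finset.Ico ((b + 1) * K) ((b + 1 + 1) * K),
            γ * expect ρ (fun η =>
              f η * (indE m ρ ε K η b * tailInd ((b + 1 + 1) * K) z η)) := by
          rw [hsplit, Finset.mul_sum]
      _ ≤ ∑ z ∈ Finset.Ico ((b + 1) * K) ((b + 1 + 1) * K),
            ((γ * mv + 2 * γ ^ 2 / (S * Real.exp lam))
                * expect ρ (fun η => tailInd ((b + 1 + 1) * K) z η * f η)
              + Real.exp lam / 2 *
                ∑ j ∈ Finset.range (z - b * K),
                  expect ρ (fun η =>
                    tailInd ((b + 1 + 1) * K) z η * dTerm m ρ f (b * K + j) η)) :=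
          Finset.sum_le_sum hz
      _ = (γ * mv + 2 * γ ^ 2 / (S * Real.exp lam))
            * ∑ z ∈ Finset.Ico ((b + 1) * K) ((b + 1 + 1) * K),
                expect ρ (fun η => tailInd ((b + 1 + 1) * K) z η * f η)
          + Real.exp lam / 2 *
            ∑ z ∈ Finset.Ico ((b + 1) * K) ((b + 1 + 1) * K),
              ∑ j ∈ Finset.range (z - b * K),
                expect ρ (fun η =>
                  tailInd ((b + 1 + 1) * K) z η * dTerm m ρ f (b * K + j) η) := by
          rw [Finset.sum_add_distrib, ← Finset.mul_sum, ← Finset.mul_sum]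
      _ ≤ (γ * mv + 2 * γ ^ 2 / (S * Real.exp lam)) * 1
          + Real.exp lam / 2 *
            ((∑ j ∈ Finset.range K, expect ρ (dTerm m ρ f (b * K + j)))
              + ∑ j ∈ Finset.range K, expect ρ (dTerm m ρ f ((b + 1) * K + j))) :=
          add_le_add (mul_le_mul_of_nonneg_left hsum1 hgmC)
            (mul_le_mul_of_nonneg_left hsum2 (by positivity))
      _ = (γ * mv + 2 * γ ^ 2 / (S * Real.exp lam))
          + Real.exp lam / 2 *
            ((∑ j ∈ Finset.range K, expect ρ (dTerm m ρ f (b * K + j)))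
              + ∑ j ∈ Finset.range K, expect ρ (dTerm m ρ f ((b + 1) * K + j))) := by
          rw [mul_one]
  -- the last block
  have hlast : γ * expect ρ (fun η => f η * indE m ρ ε K η (N / K - 1))
      ≤ (γ * mv + 2 * γ ^ 2 / (S * Real.exp lam))
        + Real.exp lam / 2 *
          ∑ j ∈ Finset.range K, expect ρ (dTerm m ρ f ((N / K - 1) * K + j)) := by
    have h6 : (N / K - 1) * K + K = (N / K) * K := by
      conv_rhs => rw [show N / K = (N / K - 1) + 1 by omega]
      ring
    have hKK : N - (N / K - 1) * K = K := by omega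
    have hpc := pair_core (lam := lam) hρ0 hρ1 m hS0 hγ hgap f hf
      (fun η => indE m ρ ε K η (N / K - 1)) (fun _ => (1:ℝ))
      (a := (N / K - 1) * K) (c := N) (le_refl N)
      (fun η => indE_01 m ε K (N / K - 1) η)
      (hmv (N / K - 1) (Finset.mem_range.mpr (by omega)))
      (fun η η' hag => indE_congr m ε η η'
        (fun x hx1 hx2 => hag x (mem_ivl.mpr ⟨hx1, x.2⟩)))
      (fun η => Or.inr rfl)
      (fun η ζ => rfl)
      (fun η _ => Or.inl rfl)
    have hL : expect ρ (fun η => f η * (indE m ρ ε K η (N / K - 1) * (1:ℝ)))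
        = expect ρ (fun η => f η * indE m ρ ε K η (N / K - 1)) :=
      expect_congr fun η => by rw [mul_one]
    have hR1' : expect ρ (fun η => (1:ℝ) * f η) = 1 :=
      calc expect ρ (fun η => (1:ℝ) * f η) = expect ρ f :=
            expect_congr fun η => one_mul (f η)
        _ = 1 := hf1
    have hR2 : (∑ j : Fin (N - (N / K - 1) * K),
          expect ρ (fun η => (1:ℝ) * dTerm m ρ f ((N / K - 1) * K + j.1) η))
        = ∑ j ∈ Finset.range K, expect ρ (dTerm m ρ f ((N / K - 1) * K + j)) := by
      rw [Fin.sum_univ_eq_sum_range (fun j =>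
        expect ρ (fun η => (1:ℝ) * dTerm m ρ f ((N / K - 1) * K + j) η)) (N - (N / K - 1) * K),
        hKK]
      refine Finset.sum_congr rfl fun j _ => ?_
      exact expect_congr fun η => one_mul _
    rw [hL, hR1', mul_one, hR2] at hpc
    exact hpc
  -- decompose the expectation of `f·V`
  have hVdec : expect ρ (fun η => f η * Vfun m ρ ε K η)
      = (∑ b ∈ Finset.range (N / K - 1),
          expect ρ (fun η => f η * (indE m ρ ε K η b * indZ K η (b + 1))))
        + expect ρ (fun η => f η * indE m ρ ε K η (N / K - 1)) := by
    calc expect ρ (fun η => f η * Vfun m ρ ε K η)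
        = expect ρ (fun η =>
            (∑ b ∈ Finset.range (N / K - 1),
              f η * (indE m ρ ε K η b * indZ K η (b + 1)))
            + f η * indE m ρ ε K η (N / K - 1)) :=
          expect_congr fun η => by rw [Vfun, mul_add, Finset.mul_sum]
      _ = expect ρ (fun η => ∑ b ∈ Finset.range (N / K - 1),
            f η * (indE m ρ ε K η b * indZ K η (b + 1)))
          + expect ρ (fun η => f η * indE m ρ ε K η (N / K - 1)) := expect_add _ _
      _ = _ := by
          congr 1
          exact expect_sum' _
            (fun b η => f η * (indE m ρ ε K η b * indZ K η (b + 1))) _ (fun η => rfl)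
  -- cast identity
  have hcastN : ((N : ℝ)) = ((N / K : ℕ) : ℝ) * (K : ℝ) := by
    exact_mod_cast hNRK.symm
  have hK0 : (0:ℝ) < (K:ℝ) := by exact_mod_cast hK
  have hcast : (N : ℝ) / K = ((N / K : ℕ) : ℝ) := by
    rw [hcastN, mul_div_assoc, div_self (ne_of_gt hK0), mul_one]
  have hcast1 : ((N / K - 1 : ℕ) : ℝ) = ((N / K : ℕ) : ℝ) - 1 := by
    have : (1:ℕ) ≤ N / K := hR1
    push_cast [Nat.cast_sub this]
    ring
  -- put everything together
  have hmain : γ * expect ρ (fun η => f η * Vfun m ρ ε K η)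
      ≤ ((N / K : ℕ) : ℝ) * (γ * mv + 2 * γ ^ 2 / (S * Real.exp lam))
        + Real.exp lam * dirichlet m ρ (fun η => Real.sqrt (f η)) := by
    calc γ * expect ρ (fun η => f η * Vfun m ρ ε K η)
        = (∑ b ∈ Finset.range (N / K - 1),
            γ * expect ρ (fun η => f η * (indE m ρ ε K η b * indZ K η (b + 1))))
          + γ * expect ρ (fun η => f η * indE m ρ ε K η (N / K - 1)) := by
          rw [hVdec, mul_add, Finset.mul_sum]
      _ ≤ (∑ b ∈ Finset.range (N / K - 1),
            ((γ * mv + 2 * γ ^ 2 / (S * Real.exp lam))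
              + Real.exp lam / 2 *
                ((∑ j ∈ Finset.range K, expect ρ (dTerm m ρ f (b * K + j)))
                  + ∑ j ∈ Finset.range K, expect ρ (dTerm m ρ f ((b + 1) * K + j)))))
          + ((γ * mv + 2 * γ ^ 2 / (S * Real.exp lam))
            + Real.exp lam / 2 *
              ∑ j ∈ Finset.range K, expect ρ (dTerm m ρ f ((N / K - 1) * K + j))) :=
          add_le_add (Finset.sum_le_sum hblock) hlast
      _ = ((N / K - 1 : ℕ) : ℝ) * (γ * mv + 2 * γ ^ 2 / (S * Real.exp lam))
          + (γ * mv + 2 * γ ^ 2 / (S * Real.exp lam))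
          + Real.exp lam / 2 *
            ((∑ b ∈ Finset.range (N / K - 1),
              ((∑ j ∈ Finset.range K, expect ρ (dTerm m ρ f (b * K + j)))
                + ∑ j ∈ Finset.range K, expect ρ (dTerm m ρ f ((b + 1) * K + j))))
              + ∑ j ∈ Finset.range K, expect ρ (dTerm m ρ f ((N / K - 1) * K + j))) := by
          rw [Finset.sum_add_distrib, Finset.sum_const, Finset.card_range, ← Finset.mul_sum,
            nsmul_eq_mul]
          ring
      _ ≤ ((N / K - 1 : ℕ) : ℝ) * (γ * mv + 2 * γ ^ 2 / (S * Real.exp lam))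
          + (γ * mv + 2 * γ ^ 2 / (S * Real.exp lam))
          + Real.exp lam / 2 *
            (2 * ∑ b ∈ Finset.range (N / K), ∑ j ∈ Finset.range K,
              expect ρ (dTerm m ρ f (b * K + j))) := by
          refine add_le_add (le_refl _) (mul_le_mul_of_nonneg_left hcount (by positivity))
      _ = ((N / K : ℕ) : ℝ) * (γ * mv + 2 * γ ^ 2 / (S * Real.exp lam))
          + Real.exp lam * dirichlet m ρ (fun η => Real.sqrt (f η)) := by
          rw [hdiri, hcast1]
          ring
  rw [hcast]
  linarith [hmain]
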